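/- arXiv:1210.7148 — 4 statements merged into one kernel-verified Lean document; each statement's English description precedes it below -/
import Mathlib

section
/- Let V be an ertex algebra. Then for all u, v, w ∈ V and all m, n ∈ ℤ, (u_n v)_m w = (−1)^{n+1} · ∑_{j≥0} binom(m,j) · (v_{n+j} u)_{m−j} w, where the sum has only finitely many nonzero terms by truncation. (This is the component form of the identity Y(Y(u,x₀)v,x₂) = Y(Y(v,−x₀)u, x₂+x₀).) -/
noncomputable section

/-- Generalized binomial coefficient `m(m-1)⋯(m-i+1)/i!` in `ℚ`, for `m : ℤ`, `i : ℕ`. -/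
def qbinom (m : ℤ) (i : ℕ) : ℚ :=
  (∏ j ∈ Finset.range i, ((m : ℚ) - (j : ℚ))) / (Nat.factorial i : ℚ)

/-- The data of bilinear products `uₙv` (for `n : ℤ`) on a `ℂ`-vector space `V` forms an
ertex algebra: bilinearity, truncation, and the Jacobi identity in Borcherds component form,
where the (finite by truncation) sums are formalized as `finsum`s. -/
structure IsErtex {V : Type} [AddCommGroup V] [Module ℂ V]
    (mul : ℤ → V → V → V) : Prop where
  add_left : ∀ (n : ℤ) (u u' v : V), mul n (u + u') v = mul n u v + mul n u' v
  smul_left : ∀ (n : ℤ) (c : ℂ) (u v : V), mul n (c • u) v = c • mul n u v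
  add_right : ∀ (n : ℤ) (u v v' : V), mul n u (v + v') = mul n u v + mul n u v'
  smul_right : ∀ (n : ℤ) (c : ℂ) (u v : V), mul n u (c • v) = c • mul n u v
  trunc : ∀ u v : V, ∃ N : ℤ, ∀ n : ℤ, N ≤ n → mul n u v = 0
  jacobi : ∀ (u v w : V) (p q r : ℤ),
    (∑ᶠ i : ℕ, (qbinom p i : ℂ) • mul (p + q - (i : ℤ)) (mul (r + (i : ℤ)) u v) w) =
    ∑ᶠ i : ℕ, ((-1 : ℂ) ^ (i : ℕ) * (qbinom r i : ℂ)) •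
      (mul (p + r - (i : ℤ)) u (mul (q + (i : ℤ)) v w)
        - ((-1 : ℂ) ^ r) • mul (q + r - (i : ℤ)) v (mul (p + (i : ℤ)) u w))

/-- A (bundled) ertex algebra. -/
structure ErtexAlgebra where
  carrier : Type
  [addCommGroup : AddCommGroup carrier]
  [module : Module ℂ carrier]
  mul : ℤ → carrier → carrier → carrier
  isErtex : IsErtex mul

attribute [instance] ErtexAlgebra.addCommGroup ErtexAlgebra.module

/-- An ertex algebra (given by its products) is injective if `uₙv = 0` for all `n, v`
implies `u = 0`. -/
def ErtexInjectiveFun {V : Type} [AddCommGroup V] [Module ℂ V]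
    (mul : ℤ → V → V → V) : Prop :=
  ∀ u : V, (∀ (n : ℤ) (v : V), mul n u v = 0) → u = 0

/-- `f` intertwines the products `mulV` and `mulW` (ertex algebra homomorphism property). -/
def IsMulHomFun {V W : Type} [AddCommGroup V] [Module ℂ V] [AddCommGroup W] [Module ℂ W]
    (mulV : ℤ → V → V → V) (mulW : ℤ → W → W → W) (f : V →ₗ[ℂ] W) : Prop :=
  ∀ (n : ℤ) (u v : V), f (mulV n u v) = mulW n (f u) (f v)

/-- Vacuum and creation properties for the vector `one`. -/
structure IsVacuum {V : Type} [AddCommGroup V] [Module ℂ V]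
    (mul : ℤ → V → V → V) (one : V) : Prop where
  vac_minus_one : ∀ v : V, mul (-1) one v = v
  vac_ne : ∀ n : ℤ, n ≠ -1 → ∀ v : V, mul n one v = 0
  create_minus_one : ∀ u : V, mul (-1) u one = u
  create_nonneg : ∀ n : ℤ, 0 ≤ n → ∀ u : V, mul n u one = 0

/-- A (bundled) vertex algebra: an ertex algebra with a vacuum vector. -/
structure VertexAlgebra extends ErtexAlgebra where
  vac : carrier
  isVacuum : IsVacuum mul vac

/-- The `D`-derivative property: `(Du)ₙ v = -n · u_{n-1} v`. -/
def IsDDeriv {V : Type} [AddCommGroup V] [Module ℂ V]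
    (mul : ℤ → V → V → V) (D : V → V) : Prop :=
  ∀ (n : ℤ) (u v : V), mul n (D u) v = ((-n : ℤ) : ℂ) • mul (n - 1) u v

/-- The `D`-bracket derivative formula: `D(uₙv) = (Du)ₙv + uₙ(Dv)`. -/
def IsDBracket {V : Type} [AddCommGroup V] [Module ℂ V]
    (mul : ℤ → V → V → V) (D : V → V) : Prop :=
  ∀ (n : ℤ) (u v : V), D (mul n u v) = mul n (D u) v + mul n u (D v)

/-- Skew-symmetry: `uₙv = ∑_{i≥0} (-1)^{n+1+i} (1/i!) Dⁱ(v_{n+i}u)` (sum finite by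
truncation, formalized as a `finsum`). -/
def IsSkew {V : Type} [AddCommGroup V] [Module ℂ V]
    (mul : ℤ → V → V → V) (D : V → V) : Prop :=
  ∀ (n : ℤ) (u v : V), mul n u v =
    ∑ᶠ i : ℕ, ((-1 : ℂ) ^ (n + 1 + (i : ℤ)) * ((Nat.factorial i : ℂ))⁻¹) •
      D^[i] (mul (n + (i : ℤ)) v u)

/-- The three defining properties of a `D`-ertex algebra structure. -/
def IsDStructure {V : Type} [AddCommGroup V] [Module ℂ V]
    (mul : ℤ → V → V → V) (D : V → V) : Prop :=
  IsDDeriv mul D ∧ IsDBracket mul D ∧ IsSkew mul D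

/-- A (bundled) `D`-ertex algebra. -/
structure DErtexAlgebra extends ErtexAlgebra where
  D : carrier →ₗ[ℂ] carrier
  isD : IsDStructure mul ⇑D

/-- `cₙ(u) = (1/(-n-1)!) D^{-n-1} u` for `n ≤ -1`, and `0` for `n ≥ 0`. -/
def DErtexAlgebra.cfun (E : DErtexAlgebra) (n : ℤ) (u : E.carrier) : E.carrier :=
  if n ≤ -1 then ((Nat.factorial (-n - 1).toNat : ℂ))⁻¹ • (⇑E.D)^[(-n - 1).toNat] u else 0

/-- The products on `E ⊕ ℂ`:
`(u,a)ₙ(v,b) = (uₙv + b·cₙ(u) + a·δ_{n,-1}·v, a·b·δ_{n,-1})`. -/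
def DErtexAlgebra.extMul (E : DErtexAlgebra) :
    ℤ → E.carrier × ℂ → E.carrier × ℂ → E.carrier × ℂ :=
  fun n p q =>
    (E.mul n p.1 q.1 + q.2 • E.cfun n p.1 + (if n = -1 then p.2 • q.1 else 0),
      if n = -1 then p.2 * q.2 else 0)

/-- The adjoined vacuum vector `1 = (0,1)` in `E ⊕ ℂ`. -/
def DErtexAlgebra.extVac (E : DErtexAlgebra) : E.carrier × ℂ := (0, 1)

/-- The linear span of `{Dⁿ(ψ u) : n ≥ 0, u ∈ E}` inside a `D`-ertex algebra. -/
def DSpan (E : ErtexAlgebra) (F : DErtexAlgebra) (ψ : E.carrier →ₗ[ℂ] F.carrier) :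
    Submodule ℂ F.carrier :=
  Submodule.span ℂ {x | ∃ (n : ℕ) (u : E.carrier), x = (⇑F.D)^[n] (ψ u)}

/-- `ψ : E → F` is a `D`-injective ertex algebra homomorphism into the `D`-ertex algebra
`F`: it is an ertex homomorphism and the span of `{Dⁿ(ψ u)}` is an injective ertex algebra. -/
def IsDInjectiveHom (E : ErtexAlgebra) (F : DErtexAlgebra)
    (ψ : E.carrier →ₗ[ℂ] F.carrier) : Prop :=
  IsMulHomFun E.mul F.mul ψ ∧
    ∀ w : F.carrier, w ∈ DSpan E F ψ →
      (∀ n : ℤ, ∀ v ∈ DSpan E F ψ, F.mul n w v = 0) → w = 0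

/-- The linear span of `{𝒟ⁿ(ψ u) : n ≥ 0, u ∈ E}` inside a vertex algebra, where
`𝒟(v) = v₋₂1` is the derivative operator. -/
def VDSpan (E : ErtexAlgebra) (W : VertexAlgebra) (ψ : E.carrier →ₗ[ℂ] W.carrier) :
    Submodule ℂ W.carrier :=
  Submodule.span ℂ {x | ∃ (n : ℕ) (u : E.carrier), x = (fun v => W.mul (-2) v W.vac)^[n] (ψ u)}

/-- `ψ : E → W` is a `D`-injective ertex algebra homomorphism into the vertex algebra `W`
regarded as a `D`-ertex algebra via `𝒟(v) = v₋₂1`. -/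
def IsVDInjectiveHom (E : ErtexAlgebra) (W : VertexAlgebra)
    (ψ : E.carrier →ₗ[ℂ] W.carrier) : Prop :=
  IsMulHomFun E.mul W.mul ψ ∧
    ∀ w : W.carrier, w ∈ VDSpan E W ψ →
      (∀ n : ℤ, ∀ v ∈ VDSpan E W ψ, W.mul n w v = 0) → w = 0


lemma qbinom_zero_left {i : ℕ} (hi : i ≠ 0) : qbinom 0 i = 0 := by
  unfold qbinom
  rw [Finset.prod_eq_zero (Finset.mem_range.mpr (Nat.pos_of_ne_zero hi)) (by simp)]
  simp

/-- in any ertex algebra,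
`(uₙv)ₘw = (-1)^{n+1} ∑_{j≥0} binom(m,j)·(v_{n+j}u)_{m-j} w`. -/
theorem stmt_1 (E : ErtexAlgebra) (u v w : E.carrier) (m n : ℤ) :
    E.mul m (E.mul n u v) w =
      ((-1 : ℂ) ^ (n + 1)) •
        ∑ᶠ j : ℕ, (qbinom m j : ℂ) • E.mul (m - (j : ℤ)) (E.mul (n + (j : ℤ)) v u) w := by
  have hA := E.isErtex.jacobi u v w 0 m n
  have hB := E.isErtex.jacobi v u w m 0 n
  have hne : (-1 : ℂ) ≠ 0 := by norm_num
  have hε : ((-1 : ℂ) ^ n) * ((-1 : ℂ) ^ n) = 1 := by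
    rw [← zpow_add₀ hne, show n + n = 2 * n by ring, zpow_mul]
    norm_num
  have hsgn : (-1 : ℂ) ^ (n + 1) = -((-1 : ℂ) ^ n) := by
    rw [zpow_add₀ hne]; simp
  have hL : (∑ᶠ i : ℕ, (qbinom 0 i : ℂ) • E.mul (0 + m - (i : ℤ)) (E.mul (n + (i : ℤ)) u v) w)
      = E.mul m (E.mul n u v) w := by
    rw [finsum_eq_single _ 0 (fun i hi => by rw [qbinom_zero_left hi]; simp)]
    simp [qbinom]
  have hsum : (∑ᶠ j : ℕ, (qbinom m j : ℂ) • E.mul (m - (j : ℤ)) (E.mul (n + (j : ℤ)) v u) w)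
      = ∑ᶠ i : ℕ, (qbinom m i : ℂ) • E.mul (m + 0 - (i : ℤ)) (E.mul (n + (i : ℤ)) v u) w := by
    apply finsum_congr; intro j; norm_num
  rw [← hL, hA, hsum, hB, smul_finsum]
  apply finsum_congr; intro i
  rw [hsgn]
  simp only [smul_sub, smul_smul]
  rw [show -(-1 : ℂ) ^ n * ((-1 : ℂ) ^ (i : ℕ) * (qbinom n i : ℂ) * (-1 : ℂ) ^ n)
      = -(((-1 : ℂ) ^ n) * ((-1 : ℂ) ^ n)) * ((-1 : ℂ) ^ (i : ℕ) * (qbinom n i : ℂ)) by ring,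
    hε]
  module


end
end

section
/- Let (V,Y) be an ertex algebra and D : V → V a linear map satisfying skew-symmetry, u_n v = ∑_{i≥0} (−1)^{n+1+i} (1/i!)·D^i (v_{n+i} u) for all u,v ∈ V and n ∈ ℤ (sum finite by truncation), and the D-derivative property, (Du)_n v = −n·u_{n−1} v for all u,v ∈ V and n ∈ ℤ. Then the D-bracket derivative formula holds: D(u_n v) = (Du)_n v + u_n (Dv) for all u,v ∈ V and n ∈ ℤ; consequently (V,Y,D) is a D-ertex algebra. -/
noncomputable section

/-- skew-symmetry and the D-derivative property imply the D-bracket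
derivative formula; consequently `(V,Y,D)` is a `D`-ertex algebra. -/
theorem stmt_3 (E : ErtexAlgebra) (D : E.carrier →ₗ[ℂ] E.carrier)
    (hskew : IsSkew E.mul ⇑D) (hderiv : IsDDeriv E.mul ⇑D) :
    IsDBracket E.mul ⇑D ∧ IsDStructure E.mul ⇑D := by
  have hit : ∀ (i : ℕ) (c : ℂ) (x : E.carrier), (⇑D)^[i] (c • x) = c • (⇑D)^[i] x := by
    intro i c x
    rw [← Module.End.pow_apply, map_smul, Module.End.pow_apply]
  have hit0 : ∀ (i : ℕ), (⇑D)^[i] (0 : E.carrier) = 0 := by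
    intro i
    rw [← Module.End.pow_apply, map_zero]
  have key : IsDBracket E.mul ⇑D := by
    intro n u v
    obtain ⟨N₀, hN₀⟩ := E.isErtex.trunc v u
    set N : ℕ := (N₀ - n + 1).toNat + 1 with hN
    have hNge : ∀ i : ℕ, N ≤ i → N₀ ≤ n - 1 + (i : ℤ) := by
      intro i hi
      have h1 : (N : ℤ) ≤ (i : ℤ) := by exact_mod_cast hi
      have h2 : (N : ℤ) = ((N₀ - n + 1).toNat : ℤ) + 1 := by push_cast [hN]; ring
      omega
    set T : ℕ → E.carrier := fun j => (⇑D)^[j] (E.mul (n - 1 + (j : ℤ)) v u) with hT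
    have hT0 : ∀ j : ℕ, N ≤ j → T j = 0 := by
      intro j hj
      simp only [hT]
      rw [hN₀ _ (hNge j hj), hit0]
    -- step 1: skew for mul n u v, as a finite sum
    have h1 : E.mul n u v = ∑ j ∈ Finset.range N,
        ((-1 : ℂ) ^ (n + 1 + (j : ℤ)) * ((Nat.factorial j : ℂ))⁻¹) •
          (⇑D)^[j] (E.mul (n + (j : ℤ)) v u) := by
      rw [hskew n u v]
      apply finsum_eq_sum_of_support_subset
      intro i hi
      simp only [Function.mem_support] at hi
      simp only [Finset.coe_range, Set.mem_Iio]
      by_contra hcon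
      push_neg at hcon
      have : N ≤ i - 1 + 1 := by omega
      have hz : E.mul (n + (i : ℤ)) v u = 0 := by
        apply hN₀
        have := hNge i (by omega)
        omega
      rw [hz, hit0, smul_zero] at hi
      exact hi rfl
    -- step 2: apply D
    have h2 : D (E.mul n u v) = ∑ j ∈ Finset.range (N + 1),
        ((-1 : ℂ) ^ (n + (j : ℤ)) * (j : ℂ) * ((Nat.factorial j : ℂ))⁻¹) • T j := by
      rw [h1, map_sum]
      conv_rhs => rw [Finset.sum_range_succ']
      have h0 : ((-1 : ℂ) ^ (n + ((0 : ℕ) : ℤ)) * ((0 : ℕ) : ℂ) *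
          ((Nat.factorial 0 : ℂ))⁻¹) • T 0 = 0 := by
        simp
      rw [h0, add_zero]
      apply Finset.sum_congr rfl
      intro j _
      rw [map_smul]
      have hiter : D ((⇑D)^[j] (E.mul (n + (j : ℤ)) v u)) =
          (⇑D)^[j + 1] (E.mul (n + (j : ℤ)) v u) := by
        rw [Function.iterate_succ_apply']
      rw [hiter]
      have harg : (n + (j : ℤ)) = n - 1 + ((j + 1 : ℕ) : ℤ) := by push_cast; ring
      have hTj : (⇑D)^[j + 1] (E.mul (n + (j : ℤ)) v u) = T (j + 1) := by
        simp only [hT, harg]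
      rw [hTj]
      congr 1
      have hfac : (Nat.factorial (j + 1) : ℂ) = ((j : ℂ) + 1) * (Nat.factorial j : ℂ) := by
        rw [Nat.factorial_succ]; push_cast; ring
      have hj1 : ((j : ℂ) + 1) ≠ 0 := by 
        have : ((j : ℂ) + 1) = ((j + 1 : ℕ) : ℂ) := by push_cast; ring
        rw [this]
        exact_mod_cast Nat.succ_ne_zero j
      have hfj : (Nat.factorial j : ℂ) ≠ 0 := by
        exact_mod_cast Nat.cast_ne_zero.mpr (Nat.factorial_ne_zero j)
      have hexp : n + ((j + 1 : ℕ) : ℤ) = n + 1 + (j : ℤ) := by push_cast; ring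
      rw [hexp, hfac]
      push_cast
      field_simp
    -- step 3: skew for mul n u (D v)
    have h3 : E.mul n u (D v) = ∑ j ∈ Finset.range (N + 1),
        ((-1 : ℂ) ^ (n + 1 + (j : ℤ)) * ((Nat.factorial j : ℂ))⁻¹ *
          ((-(n + (j : ℤ)) : ℤ) : ℂ)) • T j := by
      rw [hskew n u (D v)]
      have hcong : ∀ i : ℕ,
          ((-1 : ℂ) ^ (n + 1 + (i : ℤ)) * ((Nat.factorial i : ℂ))⁻¹) •
            (⇑D)^[i] (E.mul (n + (i : ℤ)) (D v) u) =
          ((-1 : ℂ) ^ (n + 1 + (i : ℤ)) * ((Nat.factorial i : ℂ))⁻¹ *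
            ((-(n + (i : ℤ)) : ℤ) : ℂ)) • T i := by
        intro i
        rw [hderiv (n + (i : ℤ)) v u]
        have harg : (n + (i : ℤ)) - 1 = n - 1 + (i : ℤ) := by ring
        rw [harg, hit, smul_smul]
      rw [finsum_congr hcong]
      apply finsum_eq_sum_of_support_subset
      intro i hi
      simp only [Function.mem_support] at hi
      simp only [Finset.coe_range, Set.mem_Iio]
      by_contra hcon
      push_neg at hcon
      rw [hT0 i (by omega), smul_zero] at hi
      exact hi rfl
    -- step 4: D-derivative then skew for mul n (D u) v
    have h4 : E.mul n (D u) v = ∑ j ∈ Finset.range (N + 1),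
        (((-n : ℤ) : ℂ) * ((-1 : ℂ) ^ (n - 1 + 1 + (j : ℤ)) *
          ((Nat.factorial j : ℂ))⁻¹)) • T j := by
      rw [hderiv n u v, hskew (n - 1) u v]
      have hsum : (∑ᶠ i : ℕ, ((-1 : ℂ) ^ (n - 1 + 1 + (i : ℤ)) *
          ((Nat.factorial i : ℂ))⁻¹) • (⇑D)^[i] (E.mul (n - 1 + (i : ℤ)) v u)) =
          ∑ j ∈ Finset.range (N + 1), ((-1 : ℂ) ^ (n - 1 + 1 + (j : ℤ)) *
            ((Nat.factorial j : ℂ))⁻¹) • T j := by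
        apply finsum_eq_sum_of_support_subset
        intro i hi
        simp only [Function.mem_support] at hi
        simp only [Finset.coe_range, Set.mem_Iio]
        by_contra hcon
        push_neg at hcon
        have : T i = 0 := hT0 i (by omega)
        simp only [hT] at this
        rw [this, smul_zero] at hi
        exact hi rfl
      rw [hsum, Finset.smul_sum]
      apply Finset.sum_congr rfl
      intro j _
      rw [smul_smul]
    -- combine
    rw [h2, h3, h4, ← Finset.sum_add_distrib]
    apply Finset.sum_congr rfl
    intro j _
    rw [← add_smul]
    congr 1
    have hpow1 : (-1 : ℂ) ^ (n + 1 + (j : ℤ)) = -((-1 : ℂ) ^ (n + (j : ℤ))) := by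
      rw [show n + 1 + (j : ℤ) = (n + (j : ℤ)) + 1 by ring,
        zpow_add_one₀ (by norm_num : (-1 : ℂ) ≠ 0)]
      ring
    have hpow2 : (-1 : ℂ) ^ (n - 1 + 1 + (j : ℤ)) = (-1 : ℂ) ^ (n + (j : ℤ)) := by
      norm_num
    rw [hpow1, hpow2]
    push_cast
    ring
  exact ⟨key, hderiv, key, hskew⟩

end
end

section
/- Let V be a ℂ-vector space, k ∈ ℕ, and let a, b : ℤ → End(V) be families of endomorphisms (thought of as the coefficients of formal series a(x) = ∑_{n∈ℤ} a_n x^{−n−1}, b(x) = ∑_{n∈ℤ} b_n x^{−n−1}). Suppose a and b are mutually local of order k, i.e., for all m, n ∈ ℤ, ∑_{i=0}^{k} (−1)^i C(k,i) · a_{m+k−i} ∘ b_{n+i} = ∑_{i=0}^{k} (−1)^i C(k,i) · b_{n+i} ∘ a_{m+k−i}, where C(k,i) is the ordinary binomial coefficient. Define a′_n = −n · a_{n−1} for n ∈ ℤ (the coefficients of the formal derivative a′(x)). Then a′ and b are mutually local of order k+1: for all m, n ∈ ℤ, ∑_{i=0}^{k+1} (−1)^i C(k+1,i) · a′_{m+k+1−i}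 ∘ b_{n+i} = ∑_{i=0}^{k+1} (−1)^i C(k+1,i) · b_{n+i} ∘ a′_{m+k+1−i}. -/
noncomputable section

lemma key7 {M : Type*} [AddCommGroup M] [Module ℂ M] (k : ℕ) (m : ℤ) (X : ℕ → M) :
    ∑ i ∈ Finset.range (k + 2),
      ((-1 : ℂ) ^ i * (Nat.choose (k + 1) i : ℂ) * ((-(m + (k : ℤ) + 1 - (i : ℤ)) : ℤ) : ℂ)) • X i
    = (-(m : ℂ) - (k + 1)) • (∑ i ∈ Finset.range (k + 1),
        ((-1 : ℂ) ^ i * (Nat.choose k i : ℂ)) • X i)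
      + (m : ℂ) • (∑ i ∈ Finset.range (k + 1),
        ((-1 : ℂ) ^ i * (Nat.choose k i : ℂ)) • X (i + 1)) := by
  rw [show k + 2 = (k + 1) + 1 from rfl, Finset.sum_range_succ']
  rw [Finset.sum_range_succ]
  rw [Finset.sum_range_succ' (fun i => ((-1 : ℂ) ^ i * (Nat.choose k i : ℂ)) • X i) k]
  rw [Finset.sum_range_succ (fun i => ((-1 : ℂ) ^ i * (Nat.choose k i : ℂ)) • X (i + 1)) k]
  rw [smul_add, smul_add]
  have h1 : ∑ i ∈ Finset.range k,
      ((-1 : ℂ) ^ (i + 1) * (Nat.choose (k + 1) (i + 1) : ℂ) *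
        ((-(m + (k : ℤ) + 1 - ((i + 1 : ℕ) : ℤ)) : ℤ) : ℂ)) • X (i + 1)
      = (-(m : ℂ) - (k + 1)) • ∑ i ∈ Finset.range k,
          ((-1 : ℂ) ^ (i + 1) * (Nat.choose k (i + 1) : ℂ)) • X (i + 1)
        + (m : ℂ) • ∑ i ∈ Finset.range k,
          ((-1 : ℂ) ^ i * (Nat.choose k i : ℂ)) • X (i + 1) := by
    rw [Finset.smul_sum, Finset.smul_sum, ← Finset.sum_add_distrib]
    refine Finset.sum_congr rfl fun i hi => ?_
    rw [smul_smul, smul_smul, ← add_smul]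
    congr 1
    have hi' : i < k := Finset.mem_range.mp hi
    have hq : (Nat.choose k (i + 1) * (i + 1) : ℕ) = Nat.choose k i * (k - i) :=
      Nat.choose_succ_right_eq k i
    have hq' : ((Nat.choose k (i + 1) : ℂ)) * ((i : ℂ) + 1)
        = (Nat.choose k i : ℂ) * ((k : ℂ) - i) := by
      have := congrArg (Nat.cast : ℕ → ℂ) hq
      push_cast [Nat.cast_sub hi'.le] at this
      exact this
    have hp : (Nat.choose (k + 1) (i + 1) : ℂ)
        = (Nat.choose k i : ℂ) + (Nat.choose k (i + 1) : ℂ) := by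
      rw [Nat.choose_succ_succ]; push_cast; ring
    rw [hp]
    push_cast
    linear_combination (-(-1 : ℂ) ^ i) * hq'
  rw [h1]
  have h2 : ((-1 : ℂ) ^ (k + 1) * (Nat.choose (k + 1) (k + 1) : ℂ) *
      ((-(m + (k : ℤ) + 1 - ((k + 1 : ℕ) : ℤ)) : ℤ) : ℂ)) • X (k + 1)
      = (m : ℂ) • (((-1 : ℂ) ^ k * (Nat.choose k k : ℂ)) • X (k + 1)) := by
    rw [smul_smul]; congr 1
    rw [Nat.choose_self, Nat.choose_self]; push_cast; ring
  have h3 : ((-1 : ℂ) ^ (0 : ℕ) * (Nat.choose (k + 1) 0 : ℂ) *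
      ((-(m + (k : ℤ) + 1 - ((0 : ℕ) : ℤ)) : ℤ) : ℂ)) • X 0
      = (-(m : ℂ) - (k + 1)) • (((-1 : ℂ) ^ (0 : ℕ) * (Nat.choose k 0 : ℂ)) • X 0) := by
    rw [smul_smul]; congr 1
    rw [Nat.choose_zero_right, Nat.choose_zero_right]; push_cast; ring
  rw [h2, h3]
  abel

/-- if `a(x)` and `b(x)` are mutually local of order `k`, then the formal
derivative `a′(x)` (with coefficients `a′ₙ = -n·a_{n-1}`) and `b(x)` are mutually local
of order `k+1`. -/
theorem stmt_7 (V : Type) [AddCommGroup V] [Module ℂ V] (k : ℕ)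
    (a b a' : ℤ → Module.End ℂ V)
    (ha' : ∀ n : ℤ, a' n = ((-n : ℤ) : ℂ) • a (n - 1))
    (hloc : ∀ m n : ℤ,
      ∑ i ∈ Finset.range (k + 1), ((-1 : ℂ) ^ i * (Nat.choose k i : ℂ)) •
          (a (m + (k : ℤ) - (i : ℤ)) * b (n + (i : ℤ))) =
      ∑ i ∈ Finset.range (k + 1), ((-1 : ℂ) ^ i * (Nat.choose k i : ℂ)) •
          (b (n + (i : ℤ)) * a (m + (k : ℤ) - (i : ℤ)))) :
    ∀ m n : ℤ,
      ∑ i ∈ Finset.range (k + 2), ((-1 : ℂ) ^ i * (Nat.choose (k + 1) i : ℂ)) •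
          (a' (m + (k : ℤ) + 1 - (i : ℤ)) * b (n + (i : ℤ))) =
      ∑ i ∈ Finset.range (k + 2), ((-1 : ℂ) ^ i * (Nat.choose (k + 1) i : ℂ)) •
          (b (n + (i : ℤ)) * a' (m + (k : ℤ) + 1 - (i : ℤ))) := by
  intro m n
  set X : ℕ → Module.End ℂ V := fun i => a (m + (k : ℤ) - (i : ℤ)) * b (n + (i : ℤ)) with hXdef
  set Y : ℕ → Module.End ℂ V := fun i => b (n + (i : ℤ)) * a (m + (k : ℤ) - (i : ℤ)) with hYdef
  have hL : ∑ i ∈ Finset.range (k + 2), ((-1 : ℂ) ^ i * (Nat.choose (k + 1) i : ℂ)) •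
          (a' (m + (k : ℤ) + 1 - (i : ℤ)) * b (n + (i : ℤ)))
      = ∑ i ∈ Finset.range (k + 2),
        ((-1 : ℂ) ^ i * (Nat.choose (k + 1) i : ℂ) *
          ((-(m + (k : ℤ) + 1 - (i : ℤ)) : ℤ) : ℂ)) • X i := by
    refine Finset.sum_congr rfl fun i _ => ?_
    rw [ha', smul_mul_assoc, smul_smul]
    have h : m + (k : ℤ) + 1 - (i : ℤ) - 1 = m + (k : ℤ) - (i : ℤ) := by ring
    rw [h]
  have hR : ∑ i ∈ Finset.range (k + 2), ((-1 : ℂ) ^ i * (Nat.choose (k + 1) i : ℂ)) •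
          (b (n + (i : ℤ)) * a' (m + (k : ℤ) + 1 - (i : ℤ)))
      = ∑ i ∈ Finset.range (k + 2),
        ((-1 : ℂ) ^ i * (Nat.choose (k + 1) i : ℂ) *
          ((-(m + (k : ℤ) + 1 - (i : ℤ)) : ℤ) : ℂ)) • Y i := by
    refine Finset.sum_congr rfl fun i _ => ?_
    rw [ha', mul_smul_comm, smul_smul]
    have h : m + (k : ℤ) + 1 - (i : ℤ) - 1 = m + (k : ℤ) - (i : ℤ) := by ring
    rw [h]
  rw [hL, hR, key7 k m X, key7 k m Y]
  have h1 : ∑ i ∈ Finset.range (k + 1), ((-1 : ℂ) ^ i * (Nat.choose k i : ℂ)) • X i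
      = ∑ i ∈ Finset.range (k + 1), ((-1 : ℂ) ^ i * (Nat.choose k i : ℂ)) • Y i := hloc m n
  have h2 : ∑ i ∈ Finset.range (k + 1), ((-1 : ℂ) ^ i * (Nat.choose k i : ℂ)) • X (i + 1)
      = ∑ i ∈ Finset.range (k + 1), ((-1 : ℂ) ^ i * (Nat.choose k i : ℂ)) • Y (i + 1) := by
    have e1 : ∀ i : ℕ, X (i + 1) = a (m - 1 + (k : ℤ) - (i : ℤ)) * b (n + 1 + (i : ℤ)) := by
      intro i
      simp only [hXdef]
      have ha : m + (k : ℤ) - ((i + 1 : ℕ) : ℤ) = m - 1 + (k : ℤ) - (i : ℤ) := by push_cast; ring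
      have hb : n + ((i + 1 : ℕ) : ℤ) = n + 1 + (i : ℤ) := by push_cast; ring
      rw [ha, hb]
    have e2 : ∀ i : ℕ, Y (i + 1) = b (n + 1 + (i : ℤ)) * a (m - 1 + (k : ℤ) - (i : ℤ)) := by
      intro i
      simp only [hYdef]
      have ha : m + (k : ℤ) - ((i + 1 : ℕ) : ℤ) = m - 1 + (k : ℤ) - (i : ℤ) := by push_cast; ring
      have hb : n + ((i + 1 : ℕ) : ℤ) = n + 1 + (i : ℤ) := by push_cast; ring
      rw [ha, hb]
    simp only [e1, e2]
    exact hloc (m - 1) (n + 1)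
  rw [h1, h2]

end
end

section
/- For every injective ertex algebra (E,Y) there exist an injective D-ertex algebra (E′, Y′, D) and an injective ertex algebra homomorphism i : E → E′ such that E′ is the linear span of {D^n i(u) : n ≥ 0, u ∈ E} (i.e., E′ is generated by i(E) under D). -/
noncomputable section

set_option maxHeartbeats 1000000

namespace Stmt9

open Finset

/-- Falling factorial in ℂ. -/
def fallC (n : ℤ) (i : ℕ) : ℂ := ∏ t ∈ Finset.range i, ((n : ℂ) - (t : ℂ))

@[simp] lemma fallC_zero (n : ℤ) : fallC n 0 = 1 := by simp [fallC]

lemma fallC_succ_top (n : ℤ) (i : ℕ) : fallC n (i+1) = fallC n i * ((n:ℂ) - (i:ℂ)) :=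
  Finset.prod_range_succ _ _

lemma fallC_succ_bot (n : ℤ) (i : ℕ) : fallC n (i+1) = (n:ℂ) * fallC (n-1) i := by
  rw [fallC, Finset.prod_range_succ']
  have : ∀ t ∈ Finset.range i, ((n:ℂ) - ((t+1 : ℕ) : ℂ)) = (((n-1 : ℤ)):ℂ) - (t:ℂ) := by
    intro t _; push_cast; ring
  rw [Finset.prod_congr rfl this]
  simp [fallC, mul_comm]

def bC (p : ℤ) (i : ℕ) : ℂ := ((qbinom p i : ℚ) : ℂ)

lemma bC_eq (p : ℤ) (i : ℕ) : bC p i = fallC p i / ((Nat.factorial i : ℕ) : ℂ) := by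
  unfold bC qbinom fallC
  push_cast
  ring

@[simp] lemma bC_zero (p : ℤ) : bC p 0 = 1 := by simp [bC_eq]

lemma bC_zero_left {i : ℕ} (h : i ≠ 0) : bC 0 i = 0 := by
  rw [bC_eq]
  have : fallC 0 i = 0 := by
    apply Finset.prod_eq_zero (i := 0) (by simpa using Nat.pos_of_ne_zero h)
    simp
  simp [this]

lemma factC_ne (i : ℕ) : ((Nat.factorial i : ℕ) : ℂ) ≠ 0 := by
  exact_mod_cast Nat.cast_ne_zero.mpr (Nat.factorial_ne_zero i)

/-- `(i+1) * C(p, i+1) = p * C(p-1, i)`. -/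
lemma bC_succ (p : ℤ) (i : ℕ) : ((i:ℂ)+1) * bC p (i+1) = (p:ℂ) * bC (p-1) i := by
  rw [bC_eq, bC_eq, fallC_succ_bot]
  have h1 : ((Nat.factorial (i+1) : ℕ) : ℂ) = ((i:ℂ)+1) * ((Nat.factorial i : ℕ) : ℂ) := by
    rw [Nat.factorial_succ]; push_cast; ring
  rw [h1]
  have h2 := factC_ne i
  have h3 : ((i:ℂ)+1) ≠ 0 := Nat.cast_add_one_ne_zero i
  field_simp

/-- `(p - i) * C(p, i) = p * C(p-1, i)`. -/
lemma bC_sub (p : ℤ) (i : ℕ) : ((p:ℂ) - (i:ℂ)) * bC p i = (p:ℂ) * bC (p-1) i := by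
  rw [bC_eq, bC_eq, mul_div_assoc', mul_div_assoc']
  congr 1
  rw [mul_comm, ← fallC_succ_top, fallC_succ_bot]

/-- Coefficient of the products on `E[x]`. -/
def coefM (n : ℤ) (j k s : ℕ) : ℂ :=
  (-1)^j * fallC n j * ((k.choose s : ℕ) : ℂ) * fallC (n - (j:ℤ)) s

lemma coefM_shift (n : ℤ) (j k s : ℕ) :
    coefM n (j+1) k s = (-(n:ℂ)) * coefM (n-1) j k s := by
  unfold coefM
  rw [fallC_succ_bot]
  have h1 : n - ((j:ℤ)+1) = (n-1) - (j:ℤ) := by ring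
  have h2 : ((j+1 : ℕ) : ℤ) = (j:ℤ)+1 := by push_cast; ring
  rw [h2, h1]
  ring

lemma coefM_zero_s (n : ℤ) (j k : ℕ) : coefM n j k 0 = (-1)^j * fallC n j := by
  simp [coefM]

lemma coefM_top (n : ℤ) (j k : ℕ) : coefM n j k (k+1) = 0 := by
  simp [coefM, Nat.choose_succ_self]

lemma coefM_pascal (n : ℤ) (j k s : ℕ) :
    coefM n j (k+1) (s+1) = coefM n j k (s+1) + (n:ℂ) * coefM (n-1) j k s := by
  unfold coefM
  rw [Nat.choose_succ_succ]
  have key : fallC n j * fallC (n - (j:ℤ)) (s+1)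
      = (n:ℂ) * (fallC (n-1) j * fallC ((n-1) - (j:ℤ)) s) := by
    rw [fallC_succ_bot (n - (j:ℤ)) s]
    have h1 : n - (j:ℤ) - 1 = (n-1) - (j:ℤ) := by ring
    rw [h1]
    have h2 : ((n - (j:ℤ) : ℤ) : ℂ) = (n:ℂ) - (j:ℂ) := by push_cast; ring
    rw [h2]
    have h3 : fallC n j * (((n:ℂ) - (j:ℂ)) * fallC ((n-1) - (j:ℤ)) s)
        = fallC n (j+1) * fallC ((n-1) - (j:ℤ)) s := by
      rw [fallC_succ_top]; ring
    rw [h3, fallC_succ_bot]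
    ring
  push_cast
  linear_combination ((-1:ℂ)^j * ((k.choose s : ℕ):ℂ)) * key




section Blayer

variable (E : ErtexAlgebra)

abbrev Vt := ℕ →₀ E.carrier

variable {E}

lemma emul_zero_left (n : ℤ) (v : E.carrier) : E.mul n 0 v = 0 := by
  have h := E.isErtex.smul_left n 0 0 v
  rw [zero_smul, zero_smul] at h
  exact h

lemma emul_zero_right (n : ℤ) (u : E.carrier) : E.mul n u 0 = 0 := by
  have h := E.isErtex.smul_right n 0 u 0
  rw [zero_smul, zero_smul] at h
  exact h

/-- The product of basis vectors `u x^j` and `v x^k`. -/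
def mterm (n : ℤ) (j : ℕ) (u : E.carrier) (k : ℕ) (v : E.carrier) : Vt E :=
  ∑ s ∈ Finset.range (k+1),
    coefM n j k s • Finsupp.single (k - s) (E.mul (n - (j:ℤ) - (s:ℤ)) u v)

lemma mterm_zero_left (n : ℤ) (j k : ℕ) (v : E.carrier) :
    mterm n j (0 : E.carrier) k v = 0 := by
  simp [mterm, emul_zero_left]

lemma mterm_zero_right (n : ℤ) (j k : ℕ) (u : E.carrier) :
    mterm n j u k (0 : E.carrier) = 0 := by
  simp [mterm, emul_zero_right]

lemma mterm_add_left (n : ℤ) (j k : ℕ) (u u' : E.carrier) (v : E.carrier) :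
    mterm n j (u + u') k v = mterm n j u k v + mterm n j u' k v := by
  simp [mterm, E.isErtex.add_left, Finsupp.single_add, smul_add, Finset.sum_add_distrib]

lemma mterm_add_right (n : ℤ) (j k : ℕ) (u : E.carrier) (v v' : E.carrier) :
    mterm n j u k (v + v') = mterm n j u k v + mterm n j u k v' := by
  simp [mterm, E.isErtex.add_right, Finsupp.single_add, smul_add, Finset.sum_add_distrib]

lemma mterm_smul_left (n : ℤ) (j k : ℕ) (c : ℂ) (u v : E.carrier) :
    mterm n j (c • u) k v = c • mterm n j u k v := by
  simp only [mterm, E.isErtex.smul_left, Finset.smul_sum, Finsupp.smul_single, smul_smul,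
    mul_comm]

lemma mterm_smul_right (n : ℤ) (j k : ℕ) (c : ℂ) (u v : E.carrier) :
    mterm n j u k (c • v) = c • mterm n j u k v := by
  simp only [mterm, E.isErtex.smul_right, Finset.smul_sum, Finsupp.smul_single, smul_smul,
    mul_comm]

/-- The products on `E[x]`. -/
def vmul (n : ℤ) (f g : Vt E) : Vt E :=
  f.sum fun j u => g.sum fun k v => mterm n j u k v

lemma vmul_zero_left (n : ℤ) (g : Vt E) : vmul n (0 : Vt E) g = 0 :=
  Finsupp.sum_zero_index

lemma vmul_zero_right (n : ℤ) (f : Vt E) : vmul n f (0 : Vt E) = 0 := by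
  simp [vmul, Finsupp.sum_zero_index, Finsupp.sum_fun_zero]

lemma vmul_single_single (n : ℤ) (j k : ℕ) (u v : E.carrier) :
    vmul n (Finsupp.single j u) (Finsupp.single k v) = mterm n j u k v := by
  unfold vmul
  rw [Finsupp.sum_single_index, Finsupp.sum_single_index]
  · exact mterm_zero_right n j k u
  · simp [mterm_zero_left, Finsupp.sum_fun_zero]

lemma vmul_add_left (n : ℤ) (f f' g : Vt E) :
    vmul n (f + f') g = vmul n f g + vmul n f' g := by
  unfold vmul
  apply Finsupp.sum_add_index'
  · intro j; simp [mterm_zero_left, Finsupp.sum_fun_zero]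
  · intro j u u'
    rw [← Finsupp.sum_add]
    exact Finsupp.sum_congr fun k _ => mterm_add_left n j k u u' _

lemma vmul_add_right (n : ℤ) (f g g' : Vt E) :
    vmul n f (g + g') = vmul n f g + vmul n f g' := by
  unfold vmul
  rw [← Finsupp.sum_add]
  apply Finsupp.sum_congr
  intro j _
  apply Finsupp.sum_add_index'
  · intro k; exact mterm_zero_right n j k _
  · intro k v v'; exact mterm_add_right n j k _ v v'

lemma vmul_smul_left (n : ℤ) (c : ℂ) (f g : Vt E) :
    vmul n (c • f) g = c • vmul n f g := by
  unfold vmul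
  rw [Finsupp.sum_smul_index', Finsupp.smul_sum]
  · apply Finsupp.sum_congr
    intro j _
    rw [Finsupp.smul_sum]
    exact Finsupp.sum_congr fun k _ => mterm_smul_left n j k c _ _
  · intro j; simp [mterm_zero_left, Finsupp.sum_fun_zero]

lemma vmul_smul_right (n : ℤ) (c : ℂ) (f g : Vt E) :
    vmul n f (c • g) = c • vmul n f g := by
  unfold vmul
  rw [Finsupp.smul_sum]
  apply Finsupp.sum_congr
  intro j _
  rw [Finsupp.sum_smul_index', Finsupp.smul_sum]
  · exact Finsupp.sum_congr fun k _ => mterm_smul_right n j k c _ _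
  · intro k; exact mterm_zero_right n j k _

lemma vmul_neg_left (n : ℤ) (f g : Vt E) : vmul n (-f) g = - vmul n f g := by
  have := vmul_smul_left n (-1 : ℂ) f g
  simpa using this

lemma vmul_neg_right (n : ℤ) (f g : Vt E) : vmul n f (-g) = - vmul n f g := by
  have := vmul_smul_right n (-1 : ℂ) f g
  simpa using this

lemma vmul_sub_left (n : ℤ) (f f' g : Vt E) :
    vmul n (f - f') g = vmul n f g - vmul n f' g := by
  rw [sub_eq_add_neg, vmul_add_left, vmul_neg_left, ← sub_eq_add_neg]

lemma vmul_sub_right (n : ℤ) (f g g' : Vt E) :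
    vmul n f (g - g') = vmul n f g - vmul n f g' := by
  rw [sub_eq_add_neg, vmul_add_right, vmul_neg_right, ← sub_eq_add_neg]

/-- A two-variable induction principle. -/
lemma induction₂ {P : Vt E → Vt E → Prop}
    (h0l : ∀ g, P 0 g) (h0r : ∀ f, P f 0)
    (haddl : ∀ f f' g, P f g → P f' g → P (f + f') g)
    (haddr : ∀ f g g', P f g → P f g' → P f (g + g'))
    (hs : ∀ j u k v, P (Finsupp.single j u) (Finsupp.single k v)) : ∀ f g, P f g := by
  intro f
  induction f using Finsupp.induction_linear with
  | zero => exact h0l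
  | add f f' hf hf' => exact fun g => haddl f f' g (hf g) (hf' g)
  | single j u =>
    intro g
    induction g using Finsupp.induction_linear with
    | zero => exact h0r _
    | add g g' hg hg' => exact haddr _ g g' hg hg'
    | single k v => exact hs j u k v

/-- The shift operator `D = multiplication by x`. -/
def Dl : Vt E →ₗ[ℂ] Vt E := Finsupp.lmapDomain E.carrier ℂ (· + 1)

lemma Dl_single (j : ℕ) (u : E.carrier) :
    Dl (Finsupp.single j u) = Finsupp.single (j+1) u := Finsupp.mapDomain_single

lemma mterm_shift_left (n : ℤ) (j k : ℕ) (u v : E.carrier) :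
    mterm n (j+1) u k v = (-(n:ℂ)) • mterm (n-1) j u k v := by
  unfold mterm
  rw [Finset.smul_sum]
  apply Finset.sum_congr rfl
  intro s _
  rw [smul_smul, coefM_shift]
  congr 2
  push_cast
  ring

lemma vmul_Dl_left (n : ℤ) (f g : Vt E) :
    vmul n (Dl f) g = (-(n:ℂ)) • vmul (n-1) f g := by
  induction f, g using induction₂ with
  | h0l g => simp [vmul_zero_left]
  | h0r f => simp [vmul_zero_right]
  | haddl f f' g hf hf' => rw [map_add, vmul_add_left, hf, hf', vmul_add_left, smul_add]
  | haddr f g g' hg hg' => rw [vmul_add_right, hg, hg', vmul_add_right, smul_add]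
  | hs j u k v =>
    rw [Dl_single, vmul_single_single, vmul_single_single]
    exact mterm_shift_left n j k u v

lemma mterm_shift_right (n : ℤ) (j k : ℕ) (u v : E.carrier) :
    mterm n j u (k+1) v = Dl (mterm n j u k v) + (n:ℂ) • mterm (n-1) j u k v := by
  have hDl : Dl (mterm n j u k v)
      = ∑ s ∈ Finset.range (k+1), coefM n j k s •
          Finsupp.single ((k-s)+1) (E.mul (n - (j:ℤ) - (s:ℤ)) u v) := by
    rw [mterm, map_sum]
    refine Finset.sum_congr rfl fun s _ => ?_
    rw [map_smul, Dl_single]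
  rw [hDl, Finset.sum_range_succ' (fun s => coefM n j k s •
      Finsupp.single ((k-s)+1) (E.mul (n - (j:ℤ) - (s:ℤ)) u v)) k]
  rw [show mterm n j u (k+1) v = ∑ s ∈ Finset.range (k+1+1), coefM n j (k+1) s •
      Finsupp.single ((k+1)-s) (E.mul (n - (j:ℤ) - (s:ℤ)) u v) from rfl,
    Finset.sum_range_succ' (fun s => coefM n j (k+1) s •
      Finsupp.single ((k+1)-s) (E.mul (n - (j:ℤ) - (s:ℤ)) u v)) (k+1)]
  have hA : ∀ s ∈ Finset.range (k+1),
      coefM n j (k+1) (s+1) • Finsupp.single ((k+1)-(s+1)) (E.mul (n - (j:ℤ) - ((s+1:ℕ):ℤ)) u v)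
        = coefM n j k (s+1) • Finsupp.single (k-s) (E.mul ((n-1) - (j:ℤ) - (s:ℤ)) u v)
          + (n:ℂ) • (coefM (n-1) j k s •
              Finsupp.single (k-s) (E.mul ((n-1) - (j:ℤ) - (s:ℤ)) u v)) := by
    intro s _
    have e1 : (k+1)-(s+1) = k-s := Nat.succ_sub_succ k s
    have h2 : n - (j:ℤ) - ((s+1:ℕ):ℤ) = (n-1) - (j:ℤ) - (s:ℤ) := by push_cast; ring
    rw [e1, h2, coefM_pascal, add_smul, smul_smul]
  rw [Finset.sum_congr rfl hA, Finset.sum_add_distrib, ← Finset.smul_sum]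
  have hmt : (∑ s ∈ Finset.range (k+1), coefM (n-1) j k s •
      Finsupp.single (k-s) (E.mul ((n-1) - (j:ℤ) - (s:ℤ)) u v)) = mterm (n-1) j u k v := rfl
  rw [hmt]
  rw [Finset.sum_range_succ (fun s => coefM n j k (s+1) •
      Finsupp.single (k-s) (E.mul ((n-1) - (j:ℤ) - (s:ℤ)) u v)) k]
  rw [coefM_top, zero_smul, add_zero]
  have hG : ∀ s ∈ Finset.range k,
      (fun s => coefM n j k (s+1) •
        Finsupp.single (k-s) (E.mul ((n-1) - (j:ℤ) - (s:ℤ)) u v)) s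
      = (fun s => coefM n j k (s+1) •
          Finsupp.single ((k-(s+1))+1) (E.mul (n - (j:ℤ) - ((s+1:ℕ):ℤ)) u v)) s := by
    intro s hs
    simp only
    have e1 : k - s = (k-(s+1))+1 := by
      have := Finset.mem_range.mp hs; omega
    have h2 : (n-1) - (j:ℤ) - (s:ℤ) = n - (j:ℤ) - ((s+1:ℕ):ℤ) := by push_cast; ring
    rw [e1, h2]
  rw [Finset.sum_congr rfl hG]
  have hB : coefM n j (k+1) 0 • Finsupp.single ((k+1)-0) (E.mul (n - (j:ℤ) - ((0:ℕ):ℤ)) u v)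
      = coefM n j k 0 • Finsupp.single ((k-0)+1) (E.mul (n - (j:ℤ) - ((0:ℕ):ℤ)) u v) := by
    rw [coefM_zero_s, coefM_zero_s]
    norm_num
  rw [hB]
  abel

lemma vmul_Dl_right (n : ℤ) (f g : Vt E) :
    vmul n f (Dl g) = Dl (vmul n f g) + (n:ℂ) • vmul (n-1) f g := by
  induction f, g using induction₂ with
  | h0l g => simp [vmul_zero_left]
  | h0r f => simp [vmul_zero_right]
  | haddl f f' g hf hf' =>
      rw [vmul_add_left, hf, hf', vmul_add_left, vmul_add_left, map_add, smul_add]; abel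
  | haddr f g g' hg hg' =>
      rw [map_add, vmul_add_right, hg, hg', vmul_add_right, vmul_add_right, map_add, smul_add]
      abel
  | hs j u k v =>
      rw [Dl_single, vmul_single_single, vmul_single_single, vmul_single_single]
      exact mterm_shift_right n j k u v

lemma vmul_single0 (n : ℤ) (u v : E.carrier) :
    vmul n (Finsupp.single 0 u) (Finsupp.single 0 v) = Finsupp.single 0 (E.mul n u v) := by
  rw [vmul_single_single]
  unfold mterm
  rw [Finset.sum_range_one]
  rw [coefM_zero_s]
  norm_num

lemma vmul_single0_right (n : ℤ) (f : Vt E) (v : E.carrier) :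
    ∃ e, vmul n f (Finsupp.single 0 v) = Finsupp.single 0 e := by
  induction f using Finsupp.induction_linear with
  | zero => exact ⟨0, by rw [vmul_zero_left]; simp⟩
  | add f f' hf hf' =>
      obtain ⟨e, he⟩ := hf; obtain ⟨e', he'⟩ := hf'
      exact ⟨e + e', by rw [vmul_add_left, he, he', Finsupp.single_add]⟩
  | single j u =>
      refine ⟨coefM n j 0 0 • E.mul (n - (j:ℤ) - ((0:ℕ):ℤ)) u v, ?_⟩
      rw [vmul_single_single]
      unfold mterm
      rw [Finset.sum_range_one, ← Finsupp.smul_single]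

lemma mterm_trunc (j k : ℕ) (u v : E.carrier) :
    ∃ N : ℤ, ∀ n : ℤ, N ≤ n → mterm n j u k v = 0 := by
  obtain ⟨N₀, hN₀⟩ := E.isErtex.trunc u v
  refine ⟨N₀ + (j:ℤ) + (k:ℤ), fun n hn => ?_⟩
  unfold mterm
  apply Finset.sum_eq_zero
  intro s hs
  have hs' : (s:ℤ) ≤ (k:ℤ) := by
    exact_mod_cast Nat.lt_succ_iff.mp (Finset.mem_range.mp hs)
  rw [hN₀ _ (by omega), Finsupp.single_zero, smul_zero]

lemma vmul_trunc (f g : Vt E) : ∃ N : ℤ, ∀ n : ℤ, N ≤ n → vmul n f g = 0 := by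
  induction f, g using induction₂ with
  | h0l g => exact ⟨0, fun n _ => vmul_zero_left n g⟩
  | h0r f => exact ⟨0, fun n _ => vmul_zero_right n f⟩
  | haddl f f' g hf hf' =>
      obtain ⟨N, hN⟩ := hf; obtain ⟨N', hN'⟩ := hf'
      exact ⟨max N N', fun n hn => by
        rw [vmul_add_left, hN n (le_trans (le_max_left _ _) hn),
          hN' n (le_trans (le_max_right _ _) hn), add_zero]⟩
  | haddr f g g' hg hg' =>
      obtain ⟨N, hN⟩ := hg; obtain ⟨N', hN'⟩ := hg'
      exact ⟨max N N', fun n hn => by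
        rw [vmul_add_right, hN n (le_trans (le_max_left _ _) hn),
          hN' n (le_trans (le_max_right _ _) hn), add_zero]⟩
  | hs j u k v =>
      obtain ⟨N, hN⟩ := mterm_trunc j k u v
      exact ⟨N, fun n hn => by rw [vmul_single_single]; exact hN n hn⟩

/-- Helper to produce truncation bounds in `ℕ`-indexed form. -/
lemma trunc_shift {f g : Vt E} {N : ℤ} (hN : ∀ n : ℤ, N ≤ n → vmul n f g = 0) (a : ℤ) :
    ∀ i : ℕ, (N - a).toNat ≤ i → vmul (a + (i:ℤ)) f g = 0 := by
  intro i hi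
  apply hN
  have : N - a ≤ (i:ℤ) := le_trans (Int.self_le_toNat _) (by exact_mod_cast hi)
  omega

section Jac

variable (f g h : Vt E) (p q r : ℤ)

def JL (p q r : ℤ) : Vt E :=
  ∑ᶠ i : ℕ, bC p i • vmul (p + q - (i:ℤ)) (vmul (r + (i:ℤ)) f g) h

def JR (p q r : ℤ) : Vt E :=
  ∑ᶠ i : ℕ, ((-1:ℂ)^(i:ℕ) * bC r i) •
    (vmul (p + r - (i:ℤ)) f (vmul (q + (i:ℤ)) g h)
      - ((-1:ℂ)^r) • vmul (q + r - (i:ℤ)) g (vmul (p + (i:ℤ)) f h))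

def SL (B : ℕ) (p q r : ℤ) : Vt E :=
  ∑ i ∈ Finset.range B, bC p i • vmul (p + q - (i:ℤ)) (vmul (r + (i:ℤ)) f g) h

def SF (B : ℕ) (p q r : ℤ) : Vt E :=
  ∑ i ∈ Finset.range B, ((-1:ℂ)^(i:ℕ) * bC r i) •
    vmul (p + r - (i:ℤ)) f (vmul (q + (i:ℤ)) g h)

def SG (B : ℕ) (p q r : ℤ) : Vt E :=
  ∑ i ∈ Finset.range B, ((-1:ℂ)^(i:ℕ) * bC r i * (-1:ℂ)^r) •
    vmul (q + r - (i:ℤ)) g (vmul (p + (i:ℤ)) f h)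

lemma JL_eq_SL (B : ℕ) (hB : ∀ i : ℕ, B ≤ i → vmul (r + (i:ℤ)) f g = 0) :
    JL f g h p q r = SL f g h B p q r := by
  apply finsum_eq_sum_of_support_subset
  intro i hi
  simp only [Function.mem_support] at hi
  simp only [Finset.coe_range, Set.mem_Iio]
  by_contra hc
  push_neg at hc
  exact hi (by rw [hB i hc, vmul_zero_left, smul_zero])

lemma JR_eq (B : ℕ) (hgh : ∀ i : ℕ, B ≤ i → vmul (q + (i:ℤ)) g h = 0)
    (hfh : ∀ i : ℕ, B ≤ i → vmul (p + (i:ℤ)) f h = 0) :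
    JR f g h p q r = SF f g h B p q r - SG f g h B p q r := by
  have h1 : JR f g h p q r = ∑ i ∈ Finset.range B, ((-1:ℂ)^(i:ℕ) * bC r i) •
      (vmul (p + r - (i:ℤ)) f (vmul (q + (i:ℤ)) g h)
        - ((-1:ℂ)^r) • vmul (q + r - (i:ℤ)) g (vmul (p + (i:ℤ)) f h)) := by
    apply finsum_eq_sum_of_support_subset
    intro i hi
    simp only [Function.mem_support] at hi
    simp only [Finset.coe_range, Set.mem_Iio]
    by_contra hc
    push_neg at hc
    exact hi (by rw [hgh i hc, hfh i hc, vmul_zero_right, vmul_zero_right, smul_zero,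
      sub_zero, smul_zero])
  rw [h1, SF, SG, ← Finset.sum_sub_distrib]
  refine Finset.sum_congr rfl fun i _ => ?_
  rw [smul_sub, smul_smul]

end Jac

section Steps

variable (f g h : Vt E) (p q r : ℤ)

lemma A1L (B : ℕ) (hfg : vmul (r + (B:ℤ)) f g = 0) :
    SL (Dl f) g h (B+1) p q r
      = (-(r:ℂ)) • SL f g h (B+1) p q (r-1) + (-(p:ℂ)) • SL f g h (B+1) (p-1) q r := by
  have step1 : SL (Dl f) g h (B+1) p q r
      = (∑ i ∈ Finset.range (B+1), ((-(r:ℂ)) * bC p i) •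
            vmul (p+q-(i:ℤ)) (vmul ((r-1)+(i:ℤ)) f g) h)
        + ∑ i ∈ Finset.range (B+1), ((-(i:ℂ)) * bC p i) •
            vmul (p+q-(i:ℤ)) (vmul ((r-1)+(i:ℤ)) f g) h := by
    rw [SL, ← Finset.sum_add_distrib]
    refine Finset.sum_congr rfl fun i _ => ?_
    rw [vmul_Dl_left, vmul_smul_left, smul_smul]
    have e2 : r + (i:ℤ) - 1 = (r-1) + (i:ℤ) := by ring
    rw [e2, ← add_smul]
    congr 1
    push_cast
    ring
  have step2 : (∑ i ∈ Finset.range (B+1), ((-(i:ℂ)) * bC p i) •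
        vmul (p+q-(i:ℤ)) (vmul ((r-1)+(i:ℤ)) f g) h)
      = (-(p:ℂ)) • SL f g h B (p-1) q r := by
    rw [Finset.sum_range_succ' (fun i => ((-(i:ℂ)) * bC p i) •
        vmul (p+q-(i:ℤ)) (vmul ((r-1)+(i:ℤ)) f g) h) B]
    have h0 : ((-((0:ℕ):ℂ)) * bC p 0) •
        vmul (p + q - ((0:ℕ):ℤ)) (vmul ((r-1) + ((0:ℕ):ℤ)) f g) h = 0 := by
      norm_num
    rw [h0, add_zero, SL, Finset.smul_sum]
    refine Finset.sum_congr rfl fun i _ => ?_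
    rw [smul_smul]
    have e1 : p + q - ((i+1:ℕ):ℤ) = (p-1) + q - (i:ℤ) := by push_cast; ring
    have e2 : (r-1) + ((i+1:ℕ):ℤ) = r + (i:ℤ) := by push_cast; ring
    rw [e1, e2]
    congr 1
    have hb := bC_succ p i
    push_cast
    linear_combination -hb
  have step3 : SL f g h (B+1) (p-1) q r = SL f g h B (p-1) q r := by
    rw [SL, SL, Finset.sum_range_succ, hfg, vmul_zero_left, smul_zero, add_zero]
  have head : (∑ i ∈ Finset.range (B+1), ((-(r:ℂ)) * bC p i) •
        vmul (p+q-(i:ℤ)) (vmul ((r-1)+(i:ℤ)) f g) h)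
      = (-(r:ℂ)) • SL f g h (B+1) p q (r-1) := by
    rw [SL, Finset.smul_sum]
    exact Finset.sum_congr rfl fun i _ => (smul_smul _ _ _).symm
  rw [step1, step2, step3, head]

lemma neg_one_zpow_sub (r : ℤ) : (-1:ℂ)^(r-1) = -((-1:ℂ)^r) := by
  have h := zpow_add₀ (by norm_num : (-1:ℂ) ≠ 0) (r-1) 1
  rw [show r-1+1 = r by ring] at h
  rw [h]
  simp

lemma A1F (B : ℕ) :
    SF (Dl f) g h (B+1) p q r
      = (-(r:ℂ)) • SF f g h (B+1) p q (r-1) + (-(p:ℂ)) • SF f g h (B+1) (p-1) q r := by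
  rw [SF, SF, SF, Finset.smul_sum, Finset.smul_sum, ← Finset.sum_add_distrib]
  refine Finset.sum_congr rfl fun i _ => ?_
  rw [vmul_Dl_left, smul_smul, smul_smul, smul_smul]
  have e1 : p + (r-1) - (i:ℤ) = p + r - (i:ℤ) - 1 := by ring
  have e2 : (p-1) + r - (i:ℤ) = p + r - (i:ℤ) - 1 := by ring
  rw [e1, e2, ← add_smul]
  refine congrArg (· • vmul (p + r - (i:ℤ) - 1) f (vmul (q + (i:ℤ)) g h)) ?_
  have hb := bC_sub r i
  push_cast
  linear_combination (-(-1:ℂ)^i) * hb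

lemma A1G (B : ℕ) (hfh : vmul (p + (B:ℤ)) f h = 0) :
    SG (Dl f) g h (B+1) p q r
      = (-(r:ℂ)) • SG f g h (B+1) p q (r-1) + (-(p:ℂ)) • SG f g h (B+1) (p-1) q r := by
  have step1 : SG (Dl f) g h (B+1) p q r
      = (∑ i ∈ Finset.range (B+1), ((-1:ℂ)^i * bC r i * (-1:ℂ)^r * (-(p:ℂ))) •
            vmul (q+r-(i:ℤ)) g (vmul ((p-1)+(i:ℤ)) f h))
        + ∑ i ∈ Finset.range (B+1), ((-1:ℂ)^i * bC r i * (-1:ℂ)^r * (-(i:ℂ))) •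
            vmul (q+r-(i:ℤ)) g (vmul ((p-1)+(i:ℤ)) f h) := by
    rw [SG, ← Finset.sum_add_distrib]
    refine Finset.sum_congr rfl fun i _ => ?_
    rw [vmul_Dl_left, vmul_smul_right, smul_smul]
    have e1 : p + (i:ℤ) - 1 = (p-1) + (i:ℤ) := by ring
    rw [e1, ← add_smul]
    refine congrArg (· • vmul (q+r-(i:ℤ)) g (vmul ((p-1)+(i:ℤ)) f h)) ?_
    push_cast
    ring
  have step2 : (∑ i ∈ Finset.range (B+1), ((-1:ℂ)^i * bC r i * (-1:ℂ)^r * (-(i:ℂ))) •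
        vmul (q+r-(i:ℤ)) g (vmul ((p-1)+(i:ℤ)) f h))
      = (-(r:ℂ)) • SG f g h B p q (r-1) := by
    rw [Finset.sum_range_succ' (fun i => ((-1:ℂ)^i * bC r i * (-1:ℂ)^r * (-(i:ℂ))) •
        vmul (q+r-(i:ℤ)) g (vmul ((p-1)+(i:ℤ)) f h)) B]
    have h0 : ((-1:ℂ)^(0:ℕ) * bC r 0 * (-1:ℂ)^r * (-((0:ℕ):ℂ))) •
        vmul (q+r-((0:ℕ):ℤ)) g (vmul ((p-1)+((0:ℕ):ℤ)) f h) = 0 := by norm_num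
    rw [h0, add_zero, SG, Finset.smul_sum]
    refine Finset.sum_congr rfl fun i _ => ?_
    rw [smul_smul, neg_one_zpow_sub r]
    have e1 : q + r - ((i+1:ℕ):ℤ) = q + (r-1) - (i:ℤ) := by push_cast; ring
    have e2 : (p-1) + ((i+1:ℕ):ℤ) = p + (i:ℤ) := by push_cast; ring
    rw [e1, e2]
    refine congrArg (· • vmul (q+(r-1)-(i:ℤ)) g (vmul (p+(i:ℤ)) f h)) ?_
    have hb := bC_succ r i
    push_cast
    linear_combination ((-1:ℂ)^i * (-1:ℂ)^r) * hb
  have step3 : SG f g h (B+1) p q (r-1) = SG f g h B p q (r-1) := by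
    rw [SG, SG, Finset.sum_range_succ, hfh, vmul_zero_right, smul_zero, add_zero]
  have head : (∑ i ∈ Finset.range (B+1), ((-1:ℂ)^i * bC r i * (-1:ℂ)^r * (-(p:ℂ))) •
        vmul (q+r-(i:ℤ)) g (vmul ((p-1)+(i:ℤ)) f h))
      = (-(p:ℂ)) • SG f g h (B+1) (p-1) q r := by
    rw [SG, Finset.smul_sum]
    refine Finset.sum_congr rfl fun i _ => ?_
    rw [smul_smul]
    refine congrArg (· • vmul (q+r-(i:ℤ)) g (vmul ((p-1)+(i:ℤ)) f h)) ?_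
    ring
  rw [step1, step2, head, step3]
  abel

lemma A2L (B : ℕ) (hfg : vmul (r + (B:ℤ)) f g = 0) :
    SL f (Dl g) h (B+1) p q r
      = (r:ℂ) • SL f g h (B+1) p q (r-1) - (q:ℂ) • SL f g h (B+1) p (q-1) r := by
  have step1 : SL f (Dl g) h (B+1) p q r
      = ((∑ i ∈ Finset.range (B+1), (bC p i * (-(q:ℂ))) •
            vmul (p+(q-1)-(i:ℤ)) (vmul (r+(i:ℤ)) f g) h)
        + ∑ i ∈ Finset.range (B+1), (bC p i * (-((p:ℂ)-(i:ℂ)))) •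
            vmul (p+(q-1)-(i:ℤ)) (vmul (r+(i:ℤ)) f g) h)
        + ((∑ i ∈ Finset.range (B+1), (bC p i * (r:ℂ)) •
            vmul (p+q-(i:ℤ)) (vmul ((r-1)+(i:ℤ)) f g) h)
        + ∑ i ∈ Finset.range (B+1), (bC p i * (i:ℂ)) •
            vmul (p+q-(i:ℤ)) (vmul ((r-1)+(i:ℤ)) f g) h) := by
    rw [SL, ← Finset.sum_add_distrib, ← Finset.sum_add_distrib, ← Finset.sum_add_distrib]
    refine Finset.sum_congr rfl fun i _ => ?_
    rw [vmul_Dl_right, vmul_add_left, vmul_smul_left, vmul_Dl_left, smul_add, smul_smul,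
      smul_smul]
    have e1 : p + q - (i:ℤ) - 1 = p + (q-1) - (i:ℤ) := by ring
    have e2 : r + (i:ℤ) - 1 = (r-1) + (i:ℤ) := by ring
    rw [e1, e2, ← add_smul, ← add_smul]
    have c1 : bC p i * (-(((p+q-(i:ℤ)):ℤ):ℂ)) = bC p i * (-(q:ℂ)) + bC p i * (-((p:ℂ)-(i:ℂ))) := by
      push_cast; ring
    have c2 : bC p i * (((r+(i:ℤ)):ℤ):ℂ) = bC p i * (r:ℂ) + bC p i * (i:ℂ) := by
      push_cast; ring
    rw [c1, c2]
  have headq : (∑ i ∈ Finset.range (B+1), (bC p i * (-(q:ℂ))) •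
        vmul (p+(q-1)-(i:ℤ)) (vmul (r+(i:ℤ)) f g) h)
      = -((q:ℂ) • SL f g h (B+1) p (q-1) r) := by
    rw [SL, Finset.smul_sum, ← Finset.sum_neg_distrib]
    refine Finset.sum_congr rfl fun i _ => ?_
    rw [smul_smul, ← neg_smul]
    refine congrArg (· • vmul (p+(q-1)-(i:ℤ)) (vmul (r+(i:ℤ)) f g) h) ?_
    ring
  have headr : (∑ i ∈ Finset.range (B+1), (bC p i * (r:ℂ)) •
        vmul (p+q-(i:ℤ)) (vmul ((r-1)+(i:ℤ)) f g) h)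
      = (r:ℂ) • SL f g h (B+1) p q (r-1) := by
    rw [SL, Finset.smul_sum]
    refine Finset.sum_congr rfl fun i _ => ?_
    rw [smul_smul]
    refine congrArg (· • vmul (p+q-(i:ℤ)) (vmul ((r-1)+(i:ℤ)) f g) h) ?_
    ring
  have cancel : (∑ i ∈ Finset.range (B+1), (bC p i * (-((p:ℂ)-(i:ℂ)))) •
        vmul (p+(q-1)-(i:ℤ)) (vmul (r+(i:ℤ)) f g) h)
      + (∑ i ∈ Finset.range (B+1), (bC p i * (i:ℂ)) •
        vmul (p+q-(i:ℤ)) (vmul ((r-1)+(i:ℤ)) f g) h) = 0 := by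
    have e4 : (∑ i ∈ Finset.range (B+1), (bC p i * (i:ℂ)) •
        vmul (p+q-(i:ℤ)) (vmul ((r-1)+(i:ℤ)) f g) h)
        = ∑ i ∈ Finset.range B, ((p:ℂ) * bC (p-1) i) •
            vmul (p+(q-1)-(i:ℤ)) (vmul (r+(i:ℤ)) f g) h := by
      rw [Finset.sum_range_succ' (fun i => (bC p i * (i:ℂ)) •
          vmul (p+q-(i:ℤ)) (vmul ((r-1)+(i:ℤ)) f g) h) B]
      have h0 : (bC p 0 * ((0:ℕ):ℂ)) •
          vmul (p+q-((0:ℕ):ℤ)) (vmul ((r-1)+((0:ℕ):ℤ)) f g) h = 0 := by norm_num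
      rw [h0, add_zero]
      refine Finset.sum_congr rfl fun i _ => ?_
      have e1 : p + q - ((i+1:ℕ):ℤ) = p + (q-1) - (i:ℤ) := by push_cast; ring
      have e2 : (r-1) + ((i+1:ℕ):ℤ) = r + (i:ℤ) := by push_cast; ring
      rw [e1, e2]
      refine congrArg (· • vmul (p+(q-1)-(i:ℤ)) (vmul (r+(i:ℤ)) f g) h) ?_
      have hb := bC_succ p i
      push_cast
      linear_combination hb
    have e5 : (∑ i ∈ Finset.range (B+1), (bC p i * (-((p:ℂ)-(i:ℂ)))) •
        vmul (p+(q-1)-(i:ℤ)) (vmul (r+(i:ℤ)) f g) h)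
        = -((∑ i ∈ Finset.range B, ((p:ℂ) * bC (p-1) i) •
            vmul (p+(q-1)-(i:ℤ)) (vmul (r+(i:ℤ)) f g) h)
          + ((p:ℂ) * bC (p-1) B) • vmul (p+(q-1)-(B:ℤ)) (vmul (r+(B:ℤ)) f g) h) := by
      rw [← Finset.sum_range_succ (fun i => ((p:ℂ) * bC (p-1) i) •
          vmul (p+(q-1)-(i:ℤ)) (vmul (r+(i:ℤ)) f g) h) B, ← Finset.sum_neg_distrib]
      refine Finset.sum_congr rfl fun i _ => ?_
      rw [← neg_smul]
      refine congrArg (· • vmul (p+(q-1)-(i:ℤ)) (vmul (r+(i:ℤ)) f g) h) ?_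
      have hb := bC_sub p i
      linear_combination -hb
    rw [e4, e5, hfg, vmul_zero_left, smul_zero, add_zero]
    abel
  rw [step1, headq, headr, add_add_add_comm, cancel, add_zero]
  abel

lemma A2F (B : ℕ) (hgh : vmul (q + (B:ℤ)) g h = 0) :
    SF f (Dl g) h (B+1) p q r
      = (r:ℂ) • SF f g h (B+1) p q (r-1) - (q:ℂ) • SF f g h (B+1) p (q-1) r := by
  have step1 : SF f (Dl g) h (B+1) p q r
      = (∑ i ∈ Finset.range (B+1), ((-1:ℂ)^i * bC r i * (-(q:ℂ))) •
            vmul (p+r-(i:ℤ)) f (vmul ((q-1)+(i:ℤ)) g h))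
        + ∑ i ∈ Finset.range (B+1), ((-1:ℂ)^i * bC r i * (-(i:ℂ))) •
            vmul (p+r-(i:ℤ)) f (vmul ((q-1)+(i:ℤ)) g h) := by
    rw [SF, ← Finset.sum_add_distrib]
    refine Finset.sum_congr rfl fun i _ => ?_
    rw [vmul_Dl_left, vmul_smul_right, smul_smul]
    have e1 : q + (i:ℤ) - 1 = (q-1) + (i:ℤ) := by ring
    rw [e1, ← add_smul]
    refine congrArg (· • vmul (p+r-(i:ℤ)) f (vmul ((q-1)+(i:ℤ)) g h)) ?_
    push_cast
    ring
  have step2 : (∑ i ∈ Finset.range (B+1), ((-1:ℂ)^i * bC r i * (-(i:ℂ))) •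
        vmul (p+r-(i:ℤ)) f (vmul ((q-1)+(i:ℤ)) g h))
      = (r:ℂ) • SF f g h B p q (r-1) := by
    rw [Finset.sum_range_succ' (fun i => ((-1:ℂ)^i * bC r i * (-(i:ℂ))) •
        vmul (p+r-(i:ℤ)) f (vmul ((q-1)+(i:ℤ)) g h)) B]
    have h0 : ((-1:ℂ)^(0:ℕ) * bC r 0 * (-((0:ℕ):ℂ))) •
        vmul (p+r-((0:ℕ):ℤ)) f (vmul ((q-1)+((0:ℕ):ℤ)) g h) = 0 := by norm_num
    rw [h0, add_zero, SF, Finset.smul_sum]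
    refine Finset.sum_congr rfl fun i _ => ?_
    rw [smul_smul]
    have e1 : p + r - ((i+1:ℕ):ℤ) = p + (r-1) - (i:ℤ) := by push_cast; ring
    have e2 : (q-1) + ((i+1:ℕ):ℤ) = q + (i:ℤ) := by push_cast; ring
    rw [e1, e2]
    refine congrArg (· • vmul (p+(r-1)-(i:ℤ)) f (vmul (q+(i:ℤ)) g h)) ?_
    have hb := bC_succ r i
    push_cast
    linear_combination ((-1:ℂ)^i) * hb
  have step3 : SF f g h (B+1) p q (r-1) = SF f g h B p q (r-1) := by
    rw [SF, SF, Finset.sum_range_succ, hgh, vmul_zero_right, smul_zero, add_zero]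
  have head : (∑ i ∈ Finset.range (B+1), ((-1:ℂ)^i * bC r i * (-(q:ℂ))) •
        vmul (p+r-(i:ℤ)) f (vmul ((q-1)+(i:ℤ)) g h))
      = -((q:ℂ) • SF f g h (B+1) p (q-1) r) := by
    rw [SF, Finset.smul_sum, ← Finset.sum_neg_distrib]
    refine Finset.sum_congr rfl fun i _ => ?_
    rw [smul_smul, ← neg_smul]
    refine congrArg (· • vmul (p+r-(i:ℤ)) f (vmul ((q-1)+(i:ℤ)) g h)) ?_
    ring
  rw [step1, step2, head, step3]
  abel

lemma A2G (B : ℕ) :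
    SG f (Dl g) h (B+1) p q r
      = (r:ℂ) • SG f g h (B+1) p q (r-1) - (q:ℂ) • SG f g h (B+1) p (q-1) r := by
  rw [SG, SG, SG, Finset.smul_sum, Finset.smul_sum, ← Finset.sum_sub_distrib]
  refine Finset.sum_congr rfl fun i _ => ?_
  rw [vmul_Dl_left, smul_smul, smul_smul, smul_smul, neg_one_zpow_sub r]
  have e1 : q + (r-1) - (i:ℤ) = q + r - (i:ℤ) - 1 := by ring
  have e2 : (q-1) + r - (i:ℤ) = q + r - (i:ℤ) - 1 := by ring
  rw [e1, e2, ← sub_smul]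
  refine congrArg (· • vmul (q + r - (i:ℤ) - 1) g (vmul (p + (i:ℤ)) f h)) ?_
  have hb := bC_sub r i
  push_cast
  linear_combination (-(-1:ℂ)^i * (-1:ℂ)^r) * hb

lemma A3L (B : ℕ) :
    SL f g (Dl h) (B+1) p q r
      = Dl (SL f g h (B+1) p q r) + (q:ℂ) • SL f g h (B+1) p (q-1) r
        + (p:ℂ) • SL f g h (B+1) (p-1) q r := by
  have step1 : SL f g (Dl h) (B+1) p q r
      = ((∑ i ∈ Finset.range (B+1), Dl (bC p i •
            vmul (p+q-(i:ℤ)) (vmul (r+(i:ℤ)) f g) h))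
        + ∑ i ∈ Finset.range (B+1), (bC p i * (q:ℂ)) •
            vmul (p+(q-1)-(i:ℤ)) (vmul (r+(i:ℤ)) f g) h)
        + ∑ i ∈ Finset.range (B+1), (bC p i * ((p:ℂ)-(i:ℂ))) •
            vmul (p+(q-1)-(i:ℤ)) (vmul (r+(i:ℤ)) f g) h := by
    rw [SL, ← Finset.sum_add_distrib, ← Finset.sum_add_distrib]
    refine Finset.sum_congr rfl fun i _ => ?_
    rw [vmul_Dl_right, smul_add, smul_smul, map_smul]
    have e1 : p + q - (i:ℤ) - 1 = p + (q-1) - (i:ℤ) := by ring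
    have c1 : bC p i * (((p+q-(i:ℤ)):ℤ):ℂ) = bC p i * (q:ℂ) + bC p i * ((p:ℂ)-(i:ℂ)) := by
      push_cast; ring
    rw [e1, c1, add_smul, ← add_assoc]
  have headD : (∑ i ∈ Finset.range (B+1), Dl (bC p i •
        vmul (p+q-(i:ℤ)) (vmul (r+(i:ℤ)) f g) h)) = Dl (SL f g h (B+1) p q r) := by
    rw [SL, map_sum]
  have headq : (∑ i ∈ Finset.range (B+1), (bC p i * (q:ℂ)) •
        vmul (p+(q-1)-(i:ℤ)) (vmul (r+(i:ℤ)) f g) h)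
      = (q:ℂ) • SL f g h (B+1) p (q-1) r := by
    rw [SL, Finset.smul_sum]
    refine Finset.sum_congr rfl fun i _ => ?_
    rw [smul_smul]
    refine congrArg (· • vmul (p+(q-1)-(i:ℤ)) (vmul (r+(i:ℤ)) f g) h) ?_
    ring
  have headp : (∑ i ∈ Finset.range (B+1), (bC p i * ((p:ℂ)-(i:ℂ))) •
        vmul (p+(q-1)-(i:ℤ)) (vmul (r+(i:ℤ)) f g) h)
      = (p:ℂ) • SL f g h (B+1) (p-1) q r := by
    rw [SL, Finset.smul_sum]
    refine Finset.sum_congr rfl fun i _ => ?_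
    rw [smul_smul]
    have e1 : (p-1) + q - (i:ℤ) = p + (q-1) - (i:ℤ) := by ring
    rw [e1]
    refine congrArg (· • vmul (p+(q-1)-(i:ℤ)) (vmul (r+(i:ℤ)) f g) h) ?_
    have hb := bC_sub p i
    linear_combination hb
  rw [step1, headD, headq, headp]

lemma A3F (B : ℕ) (hgh : vmul (q + (B:ℤ)) g h = 0) :
    SF f g (Dl h) (B+1) p q r
      = Dl (SF f g h (B+1) p q r) + (q:ℂ) • SF f g h (B+1) p (q-1) r
        + (p:ℂ) • SF f g h (B+1) (p-1) q r := by
  have step1 : SF f g (Dl h) (B+1) p q r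
      = (((∑ i ∈ Finset.range (B+1), Dl (((-1:ℂ)^i * bC r i) •
            vmul (p+r-(i:ℤ)) f (vmul (q+(i:ℤ)) g h)))
        + ∑ i ∈ Finset.range (B+1), ((-1:ℂ)^i * bC r i * (q:ℂ)) •
            vmul (p+r-(i:ℤ)) f (vmul ((q-1)+(i:ℤ)) g h))
        + ∑ i ∈ Finset.range (B+1), ((-1:ℂ)^i * bC r i * (p:ℂ)) •
            vmul (p+r-(i:ℤ)-1) f (vmul (q+(i:ℤ)) g h))
        + (∑ i ∈ Finset.range (B+1), ((-1:ℂ)^i * bC r i * ((r:ℂ)-(i:ℂ))) •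
            vmul (p+r-(i:ℤ)-1) f (vmul (q+(i:ℤ)) g h)
        + ∑ i ∈ Finset.range (B+1), ((-1:ℂ)^i * bC r i * (i:ℂ)) •
            vmul (p+r-(i:ℤ)) f (vmul ((q-1)+(i:ℤ)) g h)) := by
    rw [SF, ← Finset.sum_add_distrib, ← Finset.sum_add_distrib, ← Finset.sum_add_distrib,
      ← Finset.sum_add_distrib]
    refine Finset.sum_congr rfl fun i _ => ?_
    rw [vmul_Dl_right, vmul_add_right, vmul_smul_right, vmul_Dl_right, smul_add, smul_add,
      smul_smul, smul_smul, map_smul]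
    have e1 : q + (i:ℤ) - 1 = (q-1) + (i:ℤ) := by ring
    have c1 : (-1:ℂ)^i * bC r i * (((p+r-(i:ℤ)):ℤ):ℂ)
        = (-1:ℂ)^i * bC r i * (p:ℂ) + (-1:ℂ)^i * bC r i * ((r:ℂ)-(i:ℂ)) := by
      push_cast; ring
    have c2 : (-1:ℂ)^i * bC r i * (((q+(i:ℤ)):ℤ):ℂ)
        = (-1:ℂ)^i * bC r i * (q:ℂ) + (-1:ℂ)^i * bC r i * (i:ℂ) := by
      push_cast; ring
    rw [e1, c1, c2, add_smul, add_smul]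
    abel
  have headD : (∑ i ∈ Finset.range (B+1), Dl (((-1:ℂ)^i * bC r i) •
        vmul (p+r-(i:ℤ)) f (vmul (q+(i:ℤ)) g h))) = Dl (SF f g h (B+1) p q r) := by
    rw [SF, map_sum]
  have headq : (∑ i ∈ Finset.range (B+1), ((-1:ℂ)^i * bC r i * (q:ℂ)) •
        vmul (p+r-(i:ℤ)) f (vmul ((q-1)+(i:ℤ)) g h))
      = (q:ℂ) • SF f g h (B+1) p (q-1) r := by
    rw [SF, Finset.smul_sum]
    refine Finset.sum_congr rfl fun i _ => ?_
    rw [smul_smul]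
    refine congrArg (· • vmul (p+r-(i:ℤ)) f (vmul ((q-1)+(i:ℤ)) g h)) ?_
    ring
  have headp : (∑ i ∈ Finset.range (B+1), ((-1:ℂ)^i * bC r i * (p:ℂ)) •
        vmul (p+r-(i:ℤ)-1) f (vmul (q+(i:ℤ)) g h))
      = (p:ℂ) • SF f g h (B+1) (p-1) q r := by
    rw [SF, Finset.smul_sum]
    refine Finset.sum_congr rfl fun i _ => ?_
    rw [smul_smul]
    have e1 : (p-1) + r - (i:ℤ) = p + r - (i:ℤ) - 1 := by ring
    rw [e1]
    refine congrArg (· • vmul (p+r-(i:ℤ)-1) f (vmul (q+(i:ℤ)) g h)) ?_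
    ring
  have cancel : (∑ i ∈ Finset.range (B+1), ((-1:ℂ)^i * bC r i * ((r:ℂ)-(i:ℂ))) •
        vmul (p+r-(i:ℤ)-1) f (vmul (q+(i:ℤ)) g h))
      + (∑ i ∈ Finset.range (B+1), ((-1:ℂ)^i * bC r i * (i:ℂ)) •
        vmul (p+r-(i:ℤ)) f (vmul ((q-1)+(i:ℤ)) g h)) = 0 := by
    have e4 : (∑ i ∈ Finset.range (B+1), ((-1:ℂ)^i * bC r i * (i:ℂ)) •
        vmul (p+r-(i:ℤ)) f (vmul ((q-1)+(i:ℤ)) g h))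
        = -(∑ i ∈ Finset.range B, ((r:ℂ) * ((-1:ℂ)^i * bC (r-1) i)) •
            vmul (p+r-(i:ℤ)-1) f (vmul (q+(i:ℤ)) g h)) := by
      rw [Finset.sum_range_succ' (fun i => ((-1:ℂ)^i * bC r i * (i:ℂ)) •
          vmul (p+r-(i:ℤ)) f (vmul ((q-1)+(i:ℤ)) g h)) B]
      have h0 : ((-1:ℂ)^(0:ℕ) * bC r 0 * ((0:ℕ):ℂ)) •
          vmul (p+r-((0:ℕ):ℤ)) f (vmul ((q-1)+((0:ℕ):ℤ)) g h) = 0 := by norm_num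
      rw [h0, add_zero, ← Finset.sum_neg_distrib]
      refine Finset.sum_congr rfl fun i _ => ?_
      rw [← neg_smul]
      have e1 : p + r - ((i+1:ℕ):ℤ) = p + r - (i:ℤ) - 1 := by push_cast; ring
      have e2 : (q-1) + ((i+1:ℕ):ℤ) = q + (i:ℤ) := by push_cast; ring
      rw [e1, e2]
      refine congrArg (· • vmul (p+r-(i:ℤ)-1) f (vmul (q+(i:ℤ)) g h)) ?_
      have hb := bC_succ r i
      push_cast
      linear_combination (-(-1:ℂ)^i) * hb
    have e5 : (∑ i ∈ Finset.range (B+1), ((-1:ℂ)^i * bC r i * ((r:ℂ)-(i:ℂ))) •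
        vmul (p+r-(i:ℤ)-1) f (vmul (q+(i:ℤ)) g h))
        = (∑ i ∈ Finset.range B, ((r:ℂ) * ((-1:ℂ)^i * bC (r-1) i)) •
            vmul (p+r-(i:ℤ)-1) f (vmul (q+(i:ℤ)) g h))
          + ((r:ℂ) * ((-1:ℂ)^B * bC (r-1) B)) •
              vmul (p+r-(B:ℤ)-1) f (vmul (q+(B:ℤ)) g h) := by
      rw [← Finset.sum_range_succ (fun i => ((r:ℂ) * ((-1:ℂ)^i * bC (r-1) i)) •
          vmul (p+r-(i:ℤ)-1) f (vmul (q+(i:ℤ)) g h)) B]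
      refine Finset.sum_congr rfl fun i _ => ?_
      refine congrArg (· • vmul (p+r-(i:ℤ)-1) f (vmul (q+(i:ℤ)) g h)) ?_
      have hb := bC_sub r i
      linear_combination ((-1:ℂ)^i) * hb
    rw [e4, e5, hgh, vmul_zero_right, smul_zero, add_zero, add_neg_cancel]
  rw [step1, headD, headq, headp, cancel, add_zero]

lemma A3G (B : ℕ) (hfh : vmul (p + (B:ℤ)) f h = 0) :
    SG f g (Dl h) (B+1) p q r
      = Dl (SG f g h (B+1) p q r) + (q:ℂ) • SG f g h (B+1) p (q-1) r
        + (p:ℂ) • SG f g h (B+1) (p-1) q r := by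
  have step1 : SG f g (Dl h) (B+1) p q r
      = (((∑ i ∈ Finset.range (B+1), Dl (((-1:ℂ)^i * bC r i * (-1:ℂ)^r) •
            vmul (q+r-(i:ℤ)) g (vmul (p+(i:ℤ)) f h)))
        + ∑ i ∈ Finset.range (B+1), ((-1:ℂ)^i * bC r i * (-1:ℂ)^r * (q:ℂ)) •
            vmul (q+r-(i:ℤ)-1) g (vmul (p+(i:ℤ)) f h))
        + ∑ i ∈ Finset.range (B+1), ((-1:ℂ)^i * bC r i * (-1:ℂ)^r * (p:ℂ)) •
            vmul (q+r-(i:ℤ)) g (vmul ((p-1)+(i:ℤ)) f h))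
        + (∑ i ∈ Finset.range (B+1), ((-1:ℂ)^i * bC r i * (-1:ℂ)^r * ((r:ℂ)-(i:ℂ))) •
            vmul (q+r-(i:ℤ)-1) g (vmul (p+(i:ℤ)) f h)
        + ∑ i ∈ Finset.range (B+1), ((-1:ℂ)^i * bC r i * (-1:ℂ)^r * (i:ℂ)) •
            vmul (q+r-(i:ℤ)) g (vmul ((p-1)+(i:ℤ)) f h)) := by
    rw [SG, ← Finset.sum_add_distrib, ← Finset.sum_add_distrib, ← Finset.sum_add_distrib,
      ← Finset.sum_add_distrib]
    refine Finset.sum_congr rfl fun i _ => ?_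
    rw [vmul_Dl_right, vmul_add_right, vmul_smul_right, vmul_Dl_right, smul_add, smul_add,
      smul_smul, smul_smul, map_smul]
    have e1 : p + (i:ℤ) - 1 = (p-1) + (i:ℤ) := by ring
    have c1 : (-1:ℂ)^i * bC r i * (-1:ℂ)^r * (((q+r-(i:ℤ)):ℤ):ℂ)
        = (-1:ℂ)^i * bC r i * (-1:ℂ)^r * (q:ℂ)
          + (-1:ℂ)^i * bC r i * (-1:ℂ)^r * ((r:ℂ)-(i:ℂ)) := by
      push_cast; ring
    have c2 : (-1:ℂ)^i * bC r i * (-1:ℂ)^r * (((p+(i:ℤ)):ℤ):ℂ)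
        = (-1:ℂ)^i * bC r i * (-1:ℂ)^r * (p:ℂ)
          + (-1:ℂ)^i * bC r i * (-1:ℂ)^r * (i:ℂ) := by
      push_cast; ring
    rw [e1, c1, c2, add_smul, add_smul]
    abel
  have headD : (∑ i ∈ Finset.range (B+1), Dl (((-1:ℂ)^i * bC r i * (-1:ℂ)^r) •
        vmul (q+r-(i:ℤ)) g (vmul (p+(i:ℤ)) f h))) = Dl (SG f g h (B+1) p q r) := by
    rw [SG, map_sum]
  have headq : (∑ i ∈ Finset.range (B+1), ((-1:ℂ)^i * bC r i * (-1:ℂ)^r * (q:ℂ)) •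
        vmul (q+r-(i:ℤ)-1) g (vmul (p+(i:ℤ)) f h))
      = (q:ℂ) • SG f g h (B+1) p (q-1) r := by
    rw [SG, Finset.smul_sum]
    refine Finset.sum_congr rfl fun i _ => ?_
    rw [smul_smul]
    have e1 : (q-1) + r - (i:ℤ) = q + r - (i:ℤ) - 1 := by ring
    rw [e1]
    refine congrArg (· • vmul (q+r-(i:ℤ)-1) g (vmul (p+(i:ℤ)) f h)) ?_
    ring
  have headp : (∑ i ∈ Finset.range (B+1), ((-1:ℂ)^i * bC r i * (-1:ℂ)^r * (p:ℂ)) •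
        vmul (q+r-(i:ℤ)) g (vmul ((p-1)+(i:ℤ)) f h))
      = (p:ℂ) • SG f g h (B+1) (p-1) q r := by
    rw [SG, Finset.smul_sum]
    refine Finset.sum_congr rfl fun i _ => ?_
    rw [smul_smul]
    refine congrArg (· • vmul (q+r-(i:ℤ)) g (vmul ((p-1)+(i:ℤ)) f h)) ?_
    ring
  have cancel : (∑ i ∈ Finset.range (B+1), ((-1:ℂ)^i * bC r i * (-1:ℂ)^r * ((r:ℂ)-(i:ℂ))) •
        vmul (q+r-(i:ℤ)-1) g (vmul (p+(i:ℤ)) f h))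
      + (∑ i ∈ Finset.range (B+1), ((-1:ℂ)^i * bC r i * (-1:ℂ)^r * (i:ℂ)) •
        vmul (q+r-(i:ℤ)) g (vmul ((p-1)+(i:ℤ)) f h)) = 0 := by
    have e4 : (∑ i ∈ Finset.range (B+1), ((-1:ℂ)^i * bC r i * (-1:ℂ)^r * (i:ℂ)) •
        vmul (q+r-(i:ℤ)) g (vmul ((p-1)+(i:ℤ)) f h))
        = -(∑ i ∈ Finset.range B, ((r:ℂ) * ((-1:ℂ)^i * bC (r-1) i * (-1:ℂ)^r)) •
            vmul (q+r-(i:ℤ)-1) g (vmul (p+(i:ℤ)) f h)) := by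
      rw [Finset.sum_range_succ' (fun i => ((-1:ℂ)^i * bC r i * (-1:ℂ)^r * (i:ℂ)) •
          vmul (q+r-(i:ℤ)) g (vmul ((p-1)+(i:ℤ)) f h)) B]
      have h0 : ((-1:ℂ)^(0:ℕ) * bC r 0 * (-1:ℂ)^r * ((0:ℕ):ℂ)) •
          vmul (q+r-((0:ℕ):ℤ)) g (vmul ((p-1)+((0:ℕ):ℤ)) f h) = 0 := by norm_num
      rw [h0, add_zero, ← Finset.sum_neg_distrib]
      refine Finset.sum_congr rfl fun i _ => ?_
      rw [← neg_smul]
      have e1 : q + r - ((i+1:ℕ):ℤ) = q + r - (i:ℤ) - 1 := by push_cast; ring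
      have e2 : (p-1) + ((i+1:ℕ):ℤ) = p + (i:ℤ) := by push_cast; ring
      rw [e1, e2]
      refine congrArg (· • vmul (q+r-(i:ℤ)-1) g (vmul (p+(i:ℤ)) f h)) ?_
      have hb := bC_succ r i
      push_cast
      linear_combination (-(-1:ℂ)^i * (-1:ℂ)^r) * hb
    have e5 : (∑ i ∈ Finset.range (B+1), ((-1:ℂ)^i * bC r i * (-1:ℂ)^r * ((r:ℂ)-(i:ℂ))) •
        vmul (q+r-(i:ℤ)-1) g (vmul (p+(i:ℤ)) f h))
        = (∑ i ∈ Finset.range B, ((r:ℂ) * ((-1:ℂ)^i * bC (r-1) i * (-1:ℂ)^r)) •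
            vmul (q+r-(i:ℤ)-1) g (vmul (p+(i:ℤ)) f h))
          + ((r:ℂ) * ((-1:ℂ)^B * bC (r-1) B * (-1:ℂ)^r)) •
              vmul (q+r-(B:ℤ)-1) g (vmul (p+(B:ℤ)) f h) := by
      rw [← Finset.sum_range_succ (fun i => ((r:ℂ) * ((-1:ℂ)^i * bC (r-1) i * (-1:ℂ)^r)) •
          vmul (q+r-(i:ℤ)-1) g (vmul (p+(i:ℤ)) f h)) B]
      refine Finset.sum_congr rfl fun i _ => ?_
      refine congrArg (· • vmul (q+r-(i:ℤ)-1) g (vmul (p+(i:ℤ)) f h)) ?_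
      have hb := bC_sub r i
      linear_combination ((-1:ℂ)^i * (-1:ℂ)^r) * hb
    rw [e4, e5, hfh, vmul_zero_right, smul_zero, add_zero, add_neg_cancel]
  rw [step1, headD, headq, headp, cancel, add_zero]

lemma getB (f g h : Vt E) (p q r : ℤ) : ∃ B : ℕ,
    (∀ i : ℕ, B ≤ i → vmul ((r-1) + (i:ℤ)) f g = 0) ∧
    (∀ i : ℕ, B ≤ i → vmul (r + (i:ℤ)) f g = 0) ∧
    (∀ i : ℕ, B ≤ i → vmul ((q-1) + (i:ℤ)) g h = 0) ∧
    (∀ i : ℕ, B ≤ i → vmul (q + (i:ℤ)) g h = 0) ∧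
    (∀ i : ℕ, B ≤ i → vmul ((p-1) + (i:ℤ)) f h = 0) ∧
    (∀ i : ℕ, B ≤ i → vmul (p + (i:ℤ)) f h = 0) := by
  obtain ⟨N1, h1⟩ := vmul_trunc f g
  obtain ⟨N2, h2⟩ := vmul_trunc g h
  obtain ⟨N3, h3⟩ := vmul_trunc f h
  refine ⟨(N1-(r-1)).toNat + (N1-r).toNat + (N2-(q-1)).toNat + (N2-q).toNat
      + (N3-(p-1)).toNat + (N3-p).toNat,
    fun i hi => trunc_shift h1 (r-1) i (by omega),
    fun i hi => trunc_shift h1 r i (by omega),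
    fun i hi => trunc_shift h2 (q-1) i (by omega),
    fun i hi => trunc_shift h2 q i (by omega),
    fun i hi => trunc_shift h3 (p-1) i (by omega),
    fun i hi => trunc_shift h3 p i (by omega)⟩

lemma jacD1 {f g h : Vt E} (H : ∀ p q r : ℤ, JL f g h p q r = JR f g h p q r) (p q r : ℤ) :
    JL (Dl f) g h p q r = JR (Dl f) g h p q r := by
  obtain ⟨B, hfg1, hfg2, hgh1, hgh2, hfh1, hfh2⟩ := getB f g h p q r
  have hDfg : ∀ i : ℕ, B+1 ≤ i → vmul (r + (i:ℤ)) (Dl f) g = 0 := by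
    intro i hi
    rw [vmul_Dl_left, show r + (i:ℤ) - 1 = (r-1) + (i:ℤ) from by ring,
      hfg1 i (by omega), smul_zero]
  have hDfh : ∀ i : ℕ, B+1 ≤ i → vmul (p + (i:ℤ)) (Dl f) h = 0 := by
    intro i hi
    rw [vmul_Dl_left, show p + (i:ℤ) - 1 = (p-1) + (i:ℤ) from by ring,
      hfh1 i (by omega), smul_zero]
  rw [JL_eq_SL (Dl f) g h p q r (B+1) hDfg,
    JR_eq (Dl f) g h p q r (B+1) (fun i hi => hgh2 i (by omega)) hDfh,
    A1L f g h p q r B (hfg2 B le_rfl), A1F f g h p q r B,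
    A1G f g h p q r B (hfh2 B le_rfl)]
  have H1 : SL f g h (B+1) p q (r-1) = SF f g h (B+1) p q (r-1) - SG f g h (B+1) p q (r-1) := by
    rw [← JL_eq_SL f g h p q (r-1) (B+1) (fun i hi => hfg1 i (by omega)),
      ← JR_eq f g h p q (r-1) (B+1) (fun i hi => hgh2 i (by omega))
        (fun i hi => hfh2 i (by omega))]
    exact H p q (r-1)
  have H2 : SL f g h (B+1) (p-1) q r = SF f g h (B+1) (p-1) q r - SG f g h (B+1) (p-1) q r := by
    rw [← JL_eq_SL f g h (p-1) q r (B+1) (fun i hi => hfg2 i (by omega)),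
      ← JR_eq f g h (p-1) q r (B+1) (fun i hi => hgh2 i (by omega))
        (fun i hi => hfh1 i (by omega))]
    exact H (p-1) q r
  rw [H1, H2, smul_sub, smul_sub]
  abel

lemma jacD2 {f g h : Vt E} (H : ∀ p q r : ℤ, JL f g h p q r = JR f g h p q r) (p q r : ℤ) :
    JL f (Dl g) h p q r = JR f (Dl g) h p q r := by
  obtain ⟨B, hfg1, hfg2, hgh1, hgh2, hfh1, hfh2⟩ := getB f g h p q r
  have hfDg : ∀ i : ℕ, B+1 ≤ i → vmul (r + (i:ℤ)) f (Dl g) = 0 := by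
    intro i hi
    rw [vmul_Dl_right, show r + (i:ℤ) - 1 = (r-1) + (i:ℤ) from by ring,
      hfg1 i (by omega), hfg2 i (by omega), map_zero, smul_zero, add_zero]
  have hDgh : ∀ i : ℕ, B+1 ≤ i → vmul (q + (i:ℤ)) (Dl g) h = 0 := by
    intro i hi
    rw [vmul_Dl_left, show q + (i:ℤ) - 1 = (q-1) + (i:ℤ) from by ring,
      hgh1 i (by omega), smul_zero]
  rw [JL_eq_SL f (Dl g) h p q r (B+1) hfDg,
    JR_eq f (Dl g) h p q r (B+1) hDgh (fun i hi => hfh2 i (by omega)),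
    A2L f g h p q r B (hfg2 B le_rfl), A2F f g h p q r B (hgh2 B le_rfl),
    A2G f g h p q r B]
  have H1 : SL f g h (B+1) p q (r-1) = SF f g h (B+1) p q (r-1) - SG f g h (B+1) p q (r-1) := by
    rw [← JL_eq_SL f g h p q (r-1) (B+1) (fun i hi => hfg1 i (by omega)),
      ← JR_eq f g h p q (r-1) (B+1) (fun i hi => hgh2 i (by omega))
        (fun i hi => hfh2 i (by omega))]
    exact H p q (r-1)
  have H2 : SL f g h (B+1) p (q-1) r = SF f g h (B+1) p (q-1) r - SG f g h (B+1) p (q-1) r := by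
    rw [← JL_eq_SL f g h p (q-1) r (B+1) (fun i hi => hfg2 i (by omega)),
      ← JR_eq f g h p (q-1) r (B+1) (fun i hi => hgh1 i (by omega))
        (fun i hi => hfh2 i (by omega))]
    exact H p (q-1) r
  rw [H1, H2, smul_sub, smul_sub]
  abel

lemma jacD3 {f g h : Vt E} (H : ∀ p q r : ℤ, JL f g h p q r = JR f g h p q r) (p q r : ℤ) :
    JL f g (Dl h) p q r = JR f g (Dl h) p q r := by
  obtain ⟨B, hfg1, hfg2, hgh1, hgh2, hfh1, hfh2⟩ := getB f g h p q r
  have hgDh : ∀ i : ℕ, B+1 ≤ i → vmul (q + (i:ℤ)) g (Dl h) = 0 := by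
    intro i hi
    rw [vmul_Dl_right, show q + (i:ℤ) - 1 = (q-1) + (i:ℤ) from by ring,
      hgh1 i (by omega), hgh2 i (by omega), map_zero, smul_zero, add_zero]
  have hfDh : ∀ i : ℕ, B+1 ≤ i → vmul (p + (i:ℤ)) f (Dl h) = 0 := by
    intro i hi
    rw [vmul_Dl_right, show p + (i:ℤ) - 1 = (p-1) + (i:ℤ) from by ring,
      hfh1 i (by omega), hfh2 i (by omega), map_zero, smul_zero, add_zero]
  rw [JL_eq_SL f g (Dl h) p q r (B+1) (fun i hi => hfg2 i (by omega)),
    JR_eq f g (Dl h) p q r (B+1) hgDh hfDh,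
    A3L f g h p q r B, A3F f g h p q r B (hgh2 B le_rfl),
    A3G f g h p q r B (hfh2 B le_rfl)]
  have H0 : SL f g h (B+1) p q r = SF f g h (B+1) p q r - SG f g h (B+1) p q r := by
    rw [← JL_eq_SL f g h p q r (B+1) (fun i hi => hfg2 i (by omega)),
      ← JR_eq f g h p q r (B+1) (fun i hi => hgh2 i (by omega))
        (fun i hi => hfh2 i (by omega))]
    exact H p q r
  have H1 : SL f g h (B+1) p (q-1) r = SF f g h (B+1) p (q-1) r - SG f g h (B+1) p (q-1) r := by
    rw [← JL_eq_SL f g h p (q-1) r (B+1) (fun i hi => hfg2 i (by omega)),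
      ← JR_eq f g h p (q-1) r (B+1) (fun i hi => hgh1 i (by omega))
        (fun i hi => hfh2 i (by omega))]
    exact H p (q-1) r
  have H2 : SL f g h (B+1) (p-1) q r = SF f g h (B+1) (p-1) q r - SG f g h (B+1) (p-1) q r := by
    rw [← JL_eq_SL f g h (p-1) q r (B+1) (fun i hi => hfg2 i (by omega)),
      ← JR_eq f g h (p-1) q r (B+1) (fun i hi => hgh2 i (by omega))
        (fun i hi => hfh1 i (by omega))]
    exact H (p-1) q r
  rw [H0, H1, H2, smul_sub, smul_sub, map_sub]
  abel

lemma fin_of_bound {M : Type*} [Zero M] (F : ℕ → M) (B : ℕ) (hb : ∀ i, B ≤ i → F i = 0) :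
    (Function.support F).Finite :=
  Set.Finite.subset (Set.finite_Iio B)
    (fun i hi => lt_of_not_ge fun hc => hi (hb i hc))

lemma JL_fin (f g h : Vt E) (p q r : ℤ) :
    (Function.support fun i : ℕ =>
      bC p i • vmul (p+q-(i:ℤ)) (vmul (r+(i:ℤ)) f g) h).Finite := by
  obtain ⟨N, hN⟩ := vmul_trunc f g
  apply fin_of_bound _ ((N - r).toNat)
  intro i hi
  rw [trunc_shift hN r i hi, vmul_zero_left, smul_zero]

lemma JR_fin (f g h : Vt E) (p q r : ℤ) :
    (Function.support fun i : ℕ => ((-1:ℂ)^(i:ℕ) * bC r i) •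
      (vmul (p+r-(i:ℤ)) f (vmul (q+(i:ℤ)) g h)
        - ((-1:ℂ)^r) • vmul (q+r-(i:ℤ)) g (vmul (p+(i:ℤ)) f h))).Finite := by
  obtain ⟨N2, h2⟩ := vmul_trunc g h
  obtain ⟨N3, h3⟩ := vmul_trunc f h
  apply fin_of_bound _ ((N2-q).toNat + (N3-p).toNat)
  intro i hi
  rw [trunc_shift h2 q i (by omega), trunc_shift h3 p i (by omega), vmul_zero_right,
    vmul_zero_right, smul_zero, sub_zero, smul_zero]

lemma jac_base (u v w : E.carrier) (p q r : ℤ) :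
    JL (Finsupp.single 0 u) (Finsupp.single 0 v) (Finsupp.single 0 w) p q r
      = JR (Finsupp.single 0 u) (Finsupp.single 0 v) (Finsupp.single 0 w) p q r := by
  have hj := E.isErtex.jacobi u v w p q r
  have eL : ∀ i : ℕ, bC p i • vmul (p+q-(i:ℤ))
        (vmul (r+(i:ℤ)) (Finsupp.single 0 u) (Finsupp.single 0 v)) (Finsupp.single 0 w)
      = (Finsupp.lsingle (R := ℂ) 0)
          ((qbinom p i : ℂ) • E.mul (p+q-(i:ℤ)) (E.mul (r+(i:ℤ)) u v) w) := by
    intro i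
    rw [vmul_single0, vmul_single0, map_smul]
    rfl
  have eR : ∀ i : ℕ, ((-1:ℂ)^(i:ℕ) * bC r i) •
        (vmul (p+r-(i:ℤ)) (Finsupp.single 0 u)
          (vmul (q+(i:ℤ)) (Finsupp.single 0 v) (Finsupp.single 0 w))
        - ((-1:ℂ)^r) • vmul (q+r-(i:ℤ)) (Finsupp.single 0 v)
            (vmul (p+(i:ℤ)) (Finsupp.single 0 u) (Finsupp.single 0 w)))
      = (Finsupp.lsingle (R := ℂ) 0)
          (((-1:ℂ)^(i:ℕ) * (qbinom r i : ℂ)) •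
            (E.mul (p+r-(i:ℤ)) u (E.mul (q+(i:ℤ)) v w)
              - ((-1:ℂ)^r) • E.mul (q+r-(i:ℤ)) v (E.mul (p+(i:ℤ)) u w))) := by
    intro i
    rw [vmul_single0, vmul_single0, vmul_single0, vmul_single0, map_smul, map_sub, map_smul]
    rfl
  have finL : (Function.support fun i : ℕ =>
      (qbinom p i : ℂ) • E.mul (p+q-(i:ℤ)) (E.mul (r+(i:ℤ)) u v) w).Finite := by
    obtain ⟨N, hN⟩ := E.isErtex.trunc u v
    apply fin_of_bound _ ((N - r).toNat)
    intro i hi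
    have : N ≤ r + (i:ℤ) := by
      have : N - r ≤ (i:ℤ) := le_trans (Int.self_le_toNat _) (by exact_mod_cast hi)
      omega
    rw [hN _ this, emul_zero_left, smul_zero]
  have finR : (Function.support fun i : ℕ =>
      ((-1:ℂ)^(i:ℕ) * (qbinom r i : ℂ)) •
        (E.mul (p+r-(i:ℤ)) u (E.mul (q+(i:ℤ)) v w)
          - ((-1:ℂ)^r) • E.mul (q+r-(i:ℤ)) v (E.mul (p+(i:ℤ)) u w))).Finite := by
    obtain ⟨N2, h2⟩ := E.isErtex.trunc v w
    obtain ⟨N3, h3⟩ := E.isErtex.trunc u w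
    apply fin_of_bound _ ((N2-q).toNat + (N3-p).toNat)
    intro i hi
    have e2 : N2 ≤ q + (i:ℤ) := by
      have : N2 - q ≤ ((N2-q).toNat : ℤ) := Int.self_le_toNat _
      have : ((N2-q).toNat : ℤ) ≤ (i:ℤ) := by exact_mod_cast le_trans (by omega) hi
      omega
    have e3 : N3 ≤ p + (i:ℤ) := by
      have : N3 - p ≤ ((N3-p).toNat : ℤ) := Int.self_le_toNat _
      have : ((N3-p).toNat : ℤ) ≤ (i:ℤ) := by exact_mod_cast le_trans (by omega) hi
      omega
    rw [h2 _ e2, h3 _ e3, emul_zero_right, emul_zero_right, smul_zero, sub_zero, smul_zero]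
  calc JL (Finsupp.single 0 u) (Finsupp.single 0 v) (Finsupp.single 0 w) p q r
      = ∑ᶠ i : ℕ, (Finsupp.lsingle (R := ℂ) 0)
          ((qbinom p i : ℂ) • E.mul (p+q-(i:ℤ)) (E.mul (r+(i:ℤ)) u v) w) :=
        finsum_congr eL
    _ = (Finsupp.lsingle (R := ℂ) 0)
          (∑ᶠ i : ℕ, (qbinom p i : ℂ) • E.mul (p+q-(i:ℤ)) (E.mul (r+(i:ℤ)) u v) w) :=
        ((Finsupp.lsingle (R := ℂ) 0).toAddMonoidHom.map_finsum finL).symm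
    _ = (Finsupp.lsingle (R := ℂ) 0)
          (∑ᶠ i : ℕ, ((-1:ℂ)^(i:ℕ) * (qbinom r i : ℂ)) •
            (E.mul (p+r-(i:ℤ)) u (E.mul (q+(i:ℤ)) v w)
              - ((-1:ℂ)^r) • E.mul (q+r-(i:ℤ)) v (E.mul (p+(i:ℤ)) u w))) := by rw [hj]
    _ = ∑ᶠ i : ℕ, (Finsupp.lsingle (R := ℂ) 0)
          (((-1:ℂ)^(i:ℕ) * (qbinom r i : ℂ)) •
            (E.mul (p+r-(i:ℤ)) u (E.mul (q+(i:ℤ)) v w)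
              - ((-1:ℂ)^r) • E.mul (q+r-(i:ℤ)) v (E.mul (p+(i:ℤ)) u w))) :=
        (Finsupp.lsingle (R := ℂ) 0).toAddMonoidHom.map_finsum finR
    _ = JR (Finsupp.single 0 u) (Finsupp.single 0 v) (Finsupp.single 0 w) p q r :=
        (finsum_congr eR).symm

lemma jac_single : ∀ (j k l : ℕ) (u v w : E.carrier) (p q r : ℤ),
    JL (Finsupp.single j u) (Finsupp.single k v) (Finsupp.single l w) p q r
      = JR (Finsupp.single j u) (Finsupp.single k v) (Finsupp.single l w) p q r := by
  intro j
  induction j with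
  | zero =>
    intro k
    induction k with
    | zero =>
      intro l
      induction l with
      | zero => exact fun u v w p q r => jac_base u v w p q r
      | succ l ihl =>
        intro u v w p q r
        have := jacD3 (fun p q r => ihl u v w p q r) p q r
        rwa [Dl_single] at this
    | succ k ihk =>
      intro l u v w p q r
      have := jacD2 (fun p q r => ihk l u v w p q r) p q r
      rwa [Dl_single] at this
  | succ j ihj =>
    intro k l u v w p q r
    have := jacD1 (fun p q r => ihj k l u v w p q r) p q r
    rwa [Dl_single] at this

lemma JL_zero1 (g h : Vt E) (p q r : ℤ) : JL 0 g h p q r = 0 := by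
  rw [JL, finsum_congr (fun i : ℕ => by
    rw [vmul_zero_left, vmul_zero_left, smul_zero] :
    ∀ i : ℕ, bC p i • vmul (p+q-(i:ℤ)) (vmul (r+(i:ℤ)) (0 : Vt E) g) h = 0), finsum_zero]

lemma JL_zero2 (f h : Vt E) (p q r : ℤ) : JL f 0 h p q r = 0 := by
  rw [JL, finsum_congr (fun i : ℕ => by
    rw [vmul_zero_right, vmul_zero_left, smul_zero] :
    ∀ i : ℕ, bC p i • vmul (p+q-(i:ℤ)) (vmul (r+(i:ℤ)) f (0 : Vt E)) h = 0), finsum_zero]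

lemma JL_zero3 (f g : Vt E) (p q r : ℤ) : JL f g 0 p q r = 0 := by
  rw [JL, finsum_congr (fun i : ℕ => by
    rw [vmul_zero_right, smul_zero] :
    ∀ i : ℕ, bC p i • vmul (p+q-(i:ℤ)) (vmul (r+(i:ℤ)) f g) (0 : Vt E) = 0), finsum_zero]

lemma JR_zero1 (g h : Vt E) (p q r : ℤ) : JR 0 g h p q r = 0 := by
  rw [JR, finsum_congr (fun i : ℕ => by
    rw [vmul_zero_left, vmul_zero_left, vmul_zero_right, smul_zero, sub_zero, smul_zero] :
    ∀ i : ℕ, ((-1:ℂ)^(i:ℕ) * bC r i) •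
      (vmul (p+r-(i:ℤ)) (0 : Vt E) (vmul (q+(i:ℤ)) g h)
        - ((-1:ℂ)^r) • vmul (q+r-(i:ℤ)) g (vmul (p+(i:ℤ)) (0 : Vt E) h)) = 0), finsum_zero]

lemma JR_zero2 (f h : Vt E) (p q r : ℤ) : JR f 0 h p q r = 0 := by
  rw [JR, finsum_congr (fun i : ℕ => by
    rw [vmul_zero_left, vmul_zero_right, vmul_zero_left, smul_zero, sub_zero, smul_zero] :
    ∀ i : ℕ, ((-1:ℂ)^(i:ℕ) * bC r i) •
      (vmul (p+r-(i:ℤ)) f (vmul (q+(i:ℤ)) (0 : Vt E) h)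
        - ((-1:ℂ)^r) • vmul (q+r-(i:ℤ)) (0 : Vt E) (vmul (p+(i:ℤ)) f h)) = 0), finsum_zero]

lemma JR_zero3 (f g : Vt E) (p q r : ℤ) : JR f g 0 p q r = 0 := by
  rw [JR, finsum_congr (fun i : ℕ => by
    rw [vmul_zero_right, vmul_zero_right, vmul_zero_right, vmul_zero_right, smul_zero,
      sub_zero, smul_zero] :
    ∀ i : ℕ, ((-1:ℂ)^(i:ℕ) * bC r i) •
      (vmul (p+r-(i:ℤ)) f (vmul (q+(i:ℤ)) g (0 : Vt E))
        - ((-1:ℂ)^r) • vmul (q+r-(i:ℤ)) g (vmul (p+(i:ℤ)) f (0 : Vt E))) = 0), finsum_zero]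

lemma JL_add1 (f f' g h : Vt E) (p q r : ℤ) :
    JL (f+f') g h p q r = JL f g h p q r + JL f' g h p q r := by
  rw [JL, JL, JL, ← finsum_add_distrib (JL_fin f g h p q r) (JL_fin f' g h p q r)]
  exact finsum_congr fun i => by rw [vmul_add_left, vmul_add_left, smul_add]

lemma JL_add2 (f g g' h : Vt E) (p q r : ℤ) :
    JL f (g+g') h p q r = JL f g h p q r + JL f g' h p q r := by
  rw [JL, JL, JL, ← finsum_add_distrib (JL_fin f g h p q r) (JL_fin f g' h p q r)]
  exact finsum_congr fun i => by rw [vmul_add_right, vmul_add_left, smul_add]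

lemma JL_add3 (f g h h' : Vt E) (p q r : ℤ) :
    JL f g (h+h') p q r = JL f g h p q r + JL f g h' p q r := by
  rw [JL, JL, JL, ← finsum_add_distrib (JL_fin f g h p q r) (JL_fin f g h' p q r)]
  exact finsum_congr fun i => by rw [vmul_add_right, smul_add]

lemma JR_add1 (f f' g h : Vt E) (p q r : ℤ) :
    JR (f+f') g h p q r = JR f g h p q r + JR f' g h p q r := by
  rw [JR, JR, JR, ← finsum_add_distrib (JR_fin f g h p q r) (JR_fin f' g h p q r)]
  refine finsum_congr fun i => ?_
  rw [vmul_add_left, vmul_add_left, vmul_add_right, ← smul_add]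
  congr 1
  rw [smul_add]
  abel

lemma JR_add2 (f g g' h : Vt E) (p q r : ℤ) :
    JR f (g+g') h p q r = JR f g h p q r + JR f g' h p q r := by
  rw [JR, JR, JR, ← finsum_add_distrib (JR_fin f g h p q r) (JR_fin f g' h p q r)]
  refine finsum_congr fun i => ?_
  rw [vmul_add_left, vmul_add_right, vmul_add_left, ← smul_add]
  congr 1
  rw [smul_add]
  abel

lemma JR_add3 (f g h h' : Vt E) (p q r : ℤ) :
    JR f g (h+h') p q r = JR f g h p q r + JR f g h' p q r := by
  rw [JR, JR, JR, ← finsum_add_distrib (JR_fin f g h p q r) (JR_fin f g h' p q r)]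
  refine finsum_congr fun i => ?_
  rw [vmul_add_right, vmul_add_right, vmul_add_right, vmul_add_right, ← smul_add]
  congr 1
  rw [smul_add]
  abel

lemma jac_all (f g h : Vt E) (p q r : ℤ) : JL f g h p q r = JR f g h p q r := by
  induction f using Finsupp.induction_linear with
  | zero => rw [JL_zero1, JR_zero1]
  | add f f' hf hf' => rw [JL_add1, JR_add1, hf, hf']
  | single j u =>
    induction g using Finsupp.induction_linear with
    | zero => rw [JL_zero2, JR_zero2]
    | add g g' hg hg' => rw [JL_add2, JR_add2, hg, hg']
    | single k v =>
      induction h using Finsupp.induction_linear with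
      | zero => rw [JL_zero3, JR_zero3]
      | add h h' hh hh' => rw [JL_add3, JR_add3, hh, hh']
      | single l w => exact jac_single j k l u v w p q r

end Steps

section Quot

lemma JL_p0 (f g h : Vt E) (q r : ℤ) : JL f g h 0 q r = vmul q (vmul r f g) h := by
  rw [JL, finsum_eq_single _ 0 (fun i hi => by rw [bC_zero_left hi, zero_smul])]
  rw [bC_zero, one_smul]
  norm_num

variable (E) in
/-- The ideal of elements killing `ι(E)`. -/
def NN : Submodule ℂ (Vt E) where
  carrier := {w | ∀ (n : ℤ) (v : E.carrier), vmul n w (Finsupp.single 0 v) = 0}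
  add_mem' := by
    intro a b ha hb
    intro n v
    rw [vmul_add_left, ha, hb, add_zero]
  zero_mem' := fun n v => vmul_zero_left n _
  smul_mem' := by
    intro c a ha n v
    rw [vmul_smul_left, ha, smul_zero]

lemma mem_NN {w : Vt E} :
    w ∈ NN E ↔ ∀ (n : ℤ) (v : E.carrier), vmul n w (Finsupp.single 0 v) = 0 := Iff.rfl

lemma NN_mul_right {w : Vt E} (hw : w ∈ NN E) (n : ℤ) (f : Vt E) : vmul n f w ∈ NN E := by
  intro m v
  have hj := jac_all f w (Finsupp.single 0 v) 0 m n
  rw [JL_p0] at hj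
  rw [hj, JR, finsum_congr (fun i : ℕ => ?_), finsum_zero]
  obtain ⟨e, he⟩ := vmul_single0_right (0 + (i:ℤ)) f v
  rw [mem_NN.mp hw (m+(i:ℤ)) v, vmul_zero_right, he, mem_NN.mp hw (m+n-(i:ℤ)) e,
    smul_zero, sub_zero, smul_zero]

lemma NN_mul_left {w : Vt E} (hw : w ∈ NN E) (n : ℤ) (f : Vt E) : vmul n w f ∈ NN E := by
  intro m v
  have hj := jac_all w f (Finsupp.single 0 v) 0 m n
  rw [JL_p0] at hj
  rw [hj, JR, finsum_congr (fun i : ℕ => ?_), finsum_zero]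
  obtain ⟨e, he⟩ := vmul_single0_right (m + (i:ℤ)) f v
  rw [he, mem_NN.mp hw (0+n-(i:ℤ)) e, mem_NN.mp hw (0+(i:ℤ)) v, vmul_zero_right,
    smul_zero, sub_zero, smul_zero]

lemma NN_Dl {w : Vt E} (hw : w ∈ NN E) : Dl w ∈ NN E := by
  intro n v
  rw [vmul_Dl_left, mem_NN.mp hw, smul_zero]

variable (E) in
/-- The quotient, which will be the injective `D`-ertex closure. -/
abbrev Qt := Vt E ⧸ NN E

variable (E) in
def mulQ (n : ℤ) (x y : Qt E) : Qt E :=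
  Quotient.liftOn₂ x y (fun f g => Submodule.Quotient.mk (vmul n f g)) (by
    intro f g f' g' hf hg
    have hf' : f - f' ∈ NN E := (Submodule.quotientRel_def _).mp hf
    have hg' : g - g' ∈ NN E := (Submodule.quotientRel_def _).mp hg
    apply (Submodule.Quotient.eq _).mpr
    have hsplit : vmul n f g - vmul n f' g' = vmul n (f - f') g + vmul n f' (g - g') := by
      rw [vmul_sub_left, vmul_sub_right]
      abel
    rw [hsplit]
    exact (NN E).add_mem (NN_mul_left hf' n g) (NN_mul_right hg' n f'))

lemma mulQ_mk (n : ℤ) (f g : Vt E) :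
    mulQ E n (Submodule.Quotient.mk f) (Submodule.Quotient.mk g)
      = Submodule.Quotient.mk (vmul n f g) := rfl

variable (E) in
def DQ : Qt E →ₗ[ℂ] Qt E :=
  Submodule.mapQ (NN E) (NN E) Dl (by intro w hw; exact NN_Dl hw)

lemma DQ_mk (f : Vt E) :
    DQ E (Submodule.Quotient.mk f) = Submodule.Quotient.mk (Dl f) := by
  rw [DQ]
  exact Submodule.mapQ_apply _ _ _ _

lemma mulQ_add_left (n : ℤ) (x x' y : Qt E) :
    mulQ E n (x+x') y = mulQ E n x y + mulQ E n x' y := by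
  obtain ⟨f, rfl⟩ := Submodule.Quotient.mk_surjective _ x
  obtain ⟨f', rfl⟩ := Submodule.Quotient.mk_surjective _ x'
  obtain ⟨g, rfl⟩ := Submodule.Quotient.mk_surjective _ y
  rw [← Submodule.Quotient.mk_add, mulQ_mk, mulQ_mk, mulQ_mk, vmul_add_left,
    Submodule.Quotient.mk_add]

lemma mulQ_add_right (n : ℤ) (x y y' : Qt E) :
    mulQ E n x (y+y') = mulQ E n x y + mulQ E n x y' := by
  obtain ⟨f, rfl⟩ := Submodule.Quotient.mk_surjective _ x
  obtain ⟨g, rfl⟩ := Submodule.Quotient.mk_surjective _ y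
  obtain ⟨g', rfl⟩ := Submodule.Quotient.mk_surjective _ y'
  rw [← Submodule.Quotient.mk_add, mulQ_mk, mulQ_mk, mulQ_mk, vmul_add_right,
    Submodule.Quotient.mk_add]

lemma mulQ_smul_left (n : ℤ) (c : ℂ) (x y : Qt E) :
    mulQ E n (c • x) y = c • mulQ E n x y := by
  obtain ⟨f, rfl⟩ := Submodule.Quotient.mk_surjective _ x
  obtain ⟨g, rfl⟩ := Submodule.Quotient.mk_surjective _ y
  rw [← Submodule.Quotient.mk_smul, mulQ_mk, mulQ_mk, vmul_smul_left,
    Submodule.Quotient.mk_smul]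

lemma mulQ_smul_right (n : ℤ) (c : ℂ) (x y : Qt E) :
    mulQ E n x (c • y) = c • mulQ E n x y := by
  obtain ⟨f, rfl⟩ := Submodule.Quotient.mk_surjective _ x
  obtain ⟨g, rfl⟩ := Submodule.Quotient.mk_surjective _ y
  rw [← Submodule.Quotient.mk_smul, mulQ_mk, mulQ_mk, vmul_smul_right,
    Submodule.Quotient.mk_smul]

lemma mulQ_zero_left (n : ℤ) (y : Qt E) : mulQ E n 0 y = 0 := by
  obtain ⟨g, rfl⟩ := Submodule.Quotient.mk_surjective _ y
  rw [show (0 : Qt E) = Submodule.Quotient.mk 0 from (Submodule.Quotient.mk_zero _).symm,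
    mulQ_mk, vmul_zero_left]

lemma mulQ_zero_right (n : ℤ) (x : Qt E) : mulQ E n x 0 = 0 := by
  obtain ⟨f, rfl⟩ := Submodule.Quotient.mk_surjective _ x
  rw [show (0 : Qt E) = Submodule.Quotient.mk 0 from (Submodule.Quotient.mk_zero _).symm,
    mulQ_mk, vmul_zero_right]

lemma mulQ_sub_left (n : ℤ) (x x' y : Qt E) :
    mulQ E n (x - x') y = mulQ E n x y - mulQ E n x' y := by
  have h := mulQ_add_left n (x - x') x' y
  rw [sub_add_cancel] at h
  rw [eq_sub_iff_add_eq, ← h]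

lemma truncQ (x y : Qt E) : ∃ N : ℤ, ∀ n : ℤ, N ≤ n → mulQ E n x y = 0 := by
  obtain ⟨f, rfl⟩ := Submodule.Quotient.mk_surjective _ x
  obtain ⟨g, rfl⟩ := Submodule.Quotient.mk_surjective _ y
  obtain ⟨N, hN⟩ := vmul_trunc f g
  exact ⟨N, fun n hn => by rw [mulQ_mk, hN n hn, Submodule.Quotient.mk_zero]⟩

lemma truncQ_shift {x y : Qt E} {N : ℤ} (hN : ∀ n : ℤ, N ≤ n → mulQ E n x y = 0) (a : ℤ) :
    ∀ i : ℕ, (N - a).toNat ≤ i → mulQ E (a + (i:ℤ)) x y = 0 := by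
  intro i hi
  apply hN
  have : N - a ≤ (i:ℤ) := le_trans (Int.self_le_toNat _) (by exact_mod_cast hi)
  omega

lemma jacQ (x y z : Qt E) (p q r : ℤ) :
    (∑ᶠ i : ℕ, (qbinom p i : ℂ) • mulQ E (p + q - (i:ℤ)) (mulQ E (r + (i:ℤ)) x y) z) =
    ∑ᶠ i : ℕ, ((-1 : ℂ) ^ (i:ℕ) * (qbinom r i : ℂ)) •
      (mulQ E (p + r - (i:ℤ)) x (mulQ E (q + (i:ℤ)) y z)
        - ((-1 : ℂ) ^ r) • mulQ E (q + r - (i:ℤ)) y (mulQ E (p + (i:ℤ)) x z)) := by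
  obtain ⟨f, rfl⟩ := Submodule.Quotient.mk_surjective _ x
  obtain ⟨g, rfl⟩ := Submodule.Quotient.mk_surjective _ y
  obtain ⟨h, rfl⟩ := Submodule.Quotient.mk_surjective _ z
  have eL : ∀ i : ℕ, (qbinom p i : ℂ) • mulQ E (p + q - (i:ℤ))
        (mulQ E (r + (i:ℤ)) (Submodule.Quotient.mk f) (Submodule.Quotient.mk g))
        (Submodule.Quotient.mk h)
      = (NN E).mkQ (bC p i • vmul (p+q-(i:ℤ)) (vmul (r+(i:ℤ)) f g) h) := by
    intro i
    rw [mulQ_mk, mulQ_mk, map_smul, Submodule.mkQ_apply]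
    rfl
  have eR : ∀ i : ℕ, ((-1 : ℂ) ^ (i:ℕ) * (qbinom r i : ℂ)) •
        (mulQ E (p + r - (i:ℤ)) (Submodule.Quotient.mk f)
          (mulQ E (q + (i:ℤ)) (Submodule.Quotient.mk g) (Submodule.Quotient.mk h))
        - ((-1 : ℂ) ^ r) • mulQ E (q + r - (i:ℤ)) (Submodule.Quotient.mk g)
            (mulQ E (p + (i:ℤ)) (Submodule.Quotient.mk f) (Submodule.Quotient.mk h)))
      = (NN E).mkQ (((-1:ℂ)^(i:ℕ) * bC r i) •
          (vmul (p+r-(i:ℤ)) f (vmul (q+(i:ℤ)) g h)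
            - ((-1:ℂ)^r) • vmul (q+r-(i:ℤ)) g (vmul (p+(i:ℤ)) f h))) := by
    intro i
    rw [mulQ_mk, mulQ_mk, mulQ_mk, mulQ_mk, map_smul, map_sub, map_smul, Submodule.mkQ_apply,
      Submodule.mkQ_apply]
    rfl
  calc (∑ᶠ i : ℕ, (qbinom p i : ℂ) • mulQ E (p + q - (i:ℤ))
        (mulQ E (r + (i:ℤ)) (Submodule.Quotient.mk f) (Submodule.Quotient.mk g))
        (Submodule.Quotient.mk h))
      = ∑ᶠ i : ℕ, (NN E).mkQ (bC p i • vmul (p+q-(i:ℤ)) (vmul (r+(i:ℤ)) f g) h) :=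
        finsum_congr eL
    _ = (NN E).mkQ (JL f g h p q r) :=
        (((NN E).mkQ.toAddMonoidHom.map_finsum (JL_fin f g h p q r))).symm
    _ = (NN E).mkQ (JR f g h p q r) := by rw [jac_all]
    _ = ∑ᶠ i : ℕ, (NN E).mkQ (((-1:ℂ)^(i:ℕ) * bC r i) •
          (vmul (p+r-(i:ℤ)) f (vmul (q+(i:ℤ)) g h)
            - ((-1:ℂ)^r) • vmul (q+r-(i:ℤ)) g (vmul (p+(i:ℤ)) f h))) :=
        ((NN E).mkQ.toAddMonoidHom.map_finsum (JR_fin f g h p q r))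
    _ = _ := (finsum_congr eR).symm

end Quot

section Quot2

lemma injQ (hE : ErtexInjectiveFun E.mul) : ErtexInjectiveFun (mulQ E) := by
  intro x hx
  obtain ⟨w, rfl⟩ := Submodule.Quotient.mk_surjective _ x
  rw [Submodule.Quotient.mk_eq_zero, mem_NN]
  intro n v
  obtain ⟨e, he⟩ := vmul_single0_right n w v
  have h1 := hx n (Submodule.Quotient.mk (Finsupp.single 0 v))
  rw [mulQ_mk, Submodule.Quotient.mk_eq_zero, he] at h1
  have he0 : e = 0 := by
    apply hE
    intro m v'
    have h2 := mem_NN.mp h1 m v'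
    rw [vmul_single0] at h2
    exact Finsupp.single_eq_zero.mp h2
  rw [he, he0, Finsupp.single_zero]

lemma mulQ_DQ_left (n : ℤ) (x y : Qt E) :
    mulQ E n (DQ E x) y = ((-n : ℤ) : ℂ) • mulQ E (n-1) x y := by
  obtain ⟨f, rfl⟩ := Submodule.Quotient.mk_surjective _ x
  obtain ⟨g, rfl⟩ := Submodule.Quotient.mk_surjective _ y
  rw [DQ_mk, mulQ_mk, vmul_Dl_left, Submodule.Quotient.mk_smul, mulQ_mk,
    show ((-n : ℤ) : ℂ) = -(n:ℂ) from by push_cast; ring]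

lemma vmul_bracket (n : ℤ) (f g : Vt E) :
    Dl (vmul n f g) = vmul n (Dl f) g + vmul n f (Dl g) := by
  rw [vmul_Dl_left, vmul_Dl_right, add_comm (Dl (vmul n f g)), ← add_assoc, ← add_smul]
  simp

lemma mulQ_bracket (n : ℤ) (x y : Qt E) :
    DQ E (mulQ E n x y) = mulQ E n (DQ E x) y + mulQ E n x (DQ E y) := by
  obtain ⟨f, rfl⟩ := Submodule.Quotient.mk_surjective _ x
  obtain ⟨g, rfl⟩ := Submodule.Quotient.mk_surjective _ y
  rw [mulQ_mk, DQ_mk, vmul_bracket, Submodule.Quotient.mk_add, DQ_mk, DQ_mk, mulQ_mk, mulQ_mk]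

lemma iterDQ (i : ℕ) (m : ℤ) (a z : Qt E) :
    mulQ E m ((⇑(DQ E))^[i] a) z = ((-1:ℂ)^i * fallC m i) • mulQ E (m - (i:ℤ)) a z := by
  induction i generalizing m with
  | zero => simp
  | succ i ih =>
    rw [Function.iterate_succ_apply', mulQ_DQ_left, ih (m-1), smul_smul,
      show m - 1 - (i:ℤ) = m - ((i+1:ℕ):ℤ) from by push_cast; ring]
    refine congrArg (· • mulQ E (m - ((i+1:ℕ):ℤ)) a z) ?_
    rw [fallC_succ_bot]
    push_cast
    ring

lemma zpow_n1 (n : ℤ) (i : ℕ) : (-1:ℂ)^(n+1+(i:ℤ)) = (-1:ℂ)^(n+1) * (-1:ℂ)^i := by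
  rw [zpow_add₀ (by norm_num : (-1:ℂ) ≠ 0), zpow_natCast]

lemma zpow_sq (m : ℤ) : (-1:ℂ)^m * (-1:ℂ)^m = 1 := by
  rw [← mul_zpow]
  norm_num

lemma zpow_succ' (n : ℤ) : (-1:ℂ)^(n+1) = -((-1:ℂ)^n) := by
  rw [zpow_add₀ (by norm_num : (-1:ℂ) ≠ 0)]
  simp

lemma powN_sq (i : ℕ) : (-1:ℂ)^i * (-1:ℂ)^i = 1 := by
  rw [← pow_add, show i + i = 2*i from by ring, pow_mul]
  norm_num

lemma wfin (y x z : Qt E) (n m : ℤ) :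
    (Function.support fun i : ℕ =>
      bC m i • mulQ E (m - (i:ℤ)) (mulQ E (n + (i:ℤ)) y x) z).Finite := by
  obtain ⟨N, hN⟩ := truncQ y x
  apply fin_of_bound _ ((N - n).toNat)
  intro i hi
  rw [truncQ_shift hN n i hi, mulQ_zero_left, smul_zero]

lemma JRQ_fin (x y z : Qt E) (p q r : ℤ) :
    (Function.support fun i : ℕ => ((-1:ℂ)^(i:ℕ) * (qbinom r i : ℂ)) •
      (mulQ E (p + r - (i:ℤ)) x (mulQ E (q + (i:ℤ)) y z)
        - ((-1:ℂ)^r) • mulQ E (q + r - (i:ℤ)) y (mulQ E (p + (i:ℤ)) x z))).Finite := by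
  obtain ⟨N2, h2⟩ := truncQ y z
  obtain ⟨N3, h3⟩ := truncQ x z
  apply fin_of_bound _ ((N2-q).toNat + (N3-p).toNat)
  intro i hi
  rw [truncQ_shift h2 q i (by omega), truncQ_shift h3 p i (by omega), mulQ_zero_right,
    mulQ_zero_right, smul_zero, sub_zero, smul_zero]

lemma skew_weak (x y z : Qt E) (n m : ℤ) :
    mulQ E m (mulQ E n x y) z
      = (-1:ℂ)^(n+1) • ∑ᶠ i : ℕ, bC m i • mulQ E (m - (i:ℤ)) (mulQ E (n+(i:ℤ)) y x) z := by
  have J1 := jacQ x y z 0 m n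
  have J2 := jacQ y x z m 0 n
  have hbC : ∀ (a : ℤ) (i : ℕ), (qbinom a i : ℂ) = bC a i := fun _ _ => rfl
  have hL1 : (∑ᶠ i : ℕ, (qbinom 0 i : ℂ) • mulQ E (0 + m - (i:ℤ))
        (mulQ E (n + (i:ℤ)) x y) z) = mulQ E m (mulQ E n x y) z := by
    rw [finsum_eq_single _ 0 (fun i hi => by rw [hbC, bC_zero_left hi, zero_smul])]
    rw [hbC, bC_zero, one_smul]
    norm_num
  have hL2 : (∑ᶠ i : ℕ, (qbinom m i : ℂ) • mulQ E (m + 0 - (i:ℤ))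
        (mulQ E (n + (i:ℤ)) y x) z)
      = ∑ᶠ i : ℕ, bC m i • mulQ E (m - (i:ℤ)) (mulQ E (n + (i:ℤ)) y x) z :=
    finsum_congr fun i => by rw [hbC, show m + 0 - (i:ℤ) = m - (i:ℤ) from by ring]
  have hRR : (∑ᶠ i : ℕ, ((-1:ℂ)^(i:ℕ) * (qbinom n i : ℂ)) •
        (mulQ E (m + n - (i:ℤ)) y (mulQ E (0 + (i:ℤ)) x z)
          - ((-1:ℂ)^n) • mulQ E (0 + n - (i:ℤ)) x (mulQ E (m + (i:ℤ)) y z)))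
      = (-1:ℂ)^(n+1) • ∑ᶠ i : ℕ, ((-1:ℂ)^(i:ℕ) * (qbinom n i : ℂ)) •
        (mulQ E (0 + n - (i:ℤ)) x (mulQ E (m + (i:ℤ)) y z)
          - ((-1:ℂ)^n) • mulQ E (m + n - (i:ℤ)) y (mulQ E (0 + (i:ℤ)) x z)) := by
    rw [smul_finsum' _ (JRQ_fin x y z 0 m n)]
    refine finsum_congr fun i => ?_
    rw [smul_comm ((-1:ℂ)^(n+1)) ((-1:ℂ)^(i:ℕ) * (qbinom n i : ℂ))]
    refine congrArg _ ?_
    rw [zpow_succ' n, neg_smul, smul_sub, smul_smul, zpow_sq, one_smul, neg_sub]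
  have hS : (∑ᶠ i : ℕ, bC m i • mulQ E (m - (i:ℤ)) (mulQ E (n+(i:ℤ)) y x) z)
      = (-1:ℂ)^(n+1) • mulQ E m (mulQ E n x y) z := by
    rw [← hL2, J2, hRR, ← J1, hL1]
  rw [hS, smul_smul, zpow_sq, one_smul]

lemma skewQ (hE : ErtexInjectiveFun E.mul) (n : ℤ) (x y : Qt E) :
    mulQ E n x y = ∑ᶠ i : ℕ, ((-1:ℂ)^(n+1+(i:ℤ)) * ((Nat.factorial i : ℂ))⁻¹) •
      (⇑(DQ E))^[i] (mulQ E (n+(i:ℤ)) y x) := by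
  have hfam : ∀ N : ℤ, (∀ k ≥ N, mulQ E k y x = 0) → ∀ i : ℕ, (N - n).toNat ≤ i →
      ((-1:ℂ)^(n+1+(i:ℤ)) * ((Nat.factorial i : ℂ))⁻¹) •
        (⇑(DQ E))^[i] (mulQ E (n+(i:ℤ)) y x) = 0 := by
    intro N hN i hi
    rw [truncQ_shift hN n i hi, Function.iterate_fixed (map_zero _), smul_zero]
  obtain ⟨N, hN⟩ := truncQ y x
  have hfin : (Function.support fun i : ℕ =>
      ((-1:ℂ)^(n+1+(i:ℤ)) * ((Nat.factorial i : ℂ))⁻¹) •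
        (⇑(DQ E))^[i] (mulQ E (n+(i:ℤ)) y x)).Finite :=
    fin_of_bound _ ((N - n).toNat) (hfam N hN)
  set S := ∑ᶠ i : ℕ, ((-1:ℂ)^(n+1+(i:ℤ)) * ((Nat.factorial i : ℂ))⁻¹) •
      (⇑(DQ E))^[i] (mulQ E (n+(i:ℤ)) y x) with hSdef
  have key : ∀ (m : ℤ) (z : Qt E), mulQ E m (mulQ E n x y - S) z = 0 := by
    intro m z
    rw [mulQ_sub_left]
    have hS : mulQ E m S z = mulQ E m (mulQ E n x y) z := by
      have Φdef : ∀ a : Qt E, (AddMonoidHom.mk' (fun a => mulQ E m a z)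
          (fun a b => mulQ_add_left m a b z)) a = mulQ E m a z := fun a => rfl
      calc mulQ E m S z
          = ∑ᶠ i : ℕ, mulQ E m (((-1:ℂ)^(n+1+(i:ℤ)) * ((Nat.factorial i : ℂ))⁻¹) •
              (⇑(DQ E))^[i] (mulQ E (n+(i:ℤ)) y x)) z := by
            rw [← Φdef S, hSdef,
              (AddMonoidHom.mk' (fun a => mulQ E m a z)
                (fun a b => mulQ_add_left m a b z)).map_finsum hfin]
            rfl
        _ = ∑ᶠ i : ℕ, ((-1:ℂ)^(n+1)) • (bC m i •
              mulQ E (m - (i:ℤ)) (mulQ E (n+(i:ℤ)) y x) z) := by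
            refine finsum_congr fun i => ?_
            rw [mulQ_smul_left, iterDQ, smul_smul, smul_smul]
            refine congrArg (· • mulQ E (m - (i:ℤ)) (mulQ E (n+(i:ℤ)) y x) z) ?_
            rw [zpow_n1, bC_eq, div_eq_mul_inv]
            have hsq := powN_sq i
            linear_combination ((-1:ℂ)^(n+1) * ((Nat.factorial i : ℂ))⁻¹ * fallC m i) * hsq
        _ = ((-1:ℂ)^(n+1)) • ∑ᶠ i : ℕ, bC m i •
              mulQ E (m - (i:ℤ)) (mulQ E (n+(i:ℤ)) y x) z :=
            (smul_finsum' _ (wfin y x z n m)).symm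
        _ = mulQ E m (mulQ E n x y) z := (skew_weak x y z n m).symm
    rw [hS, sub_self]
  have h0 := injQ hE (mulQ E n x y - S) key
  exact sub_eq_zero.mp h0

end Quot2

section Final

lemma single0_NN (hE : ErtexInjectiveFun E.mul) {u : E.carrier}
    (h : Finsupp.single (0:ℕ) u ∈ NN E) : u = 0 := by
  apply hE
  intro m v'
  have h2 := mem_NN.mp h m v'
  rw [vmul_single0] at h2
  exact Finsupp.single_eq_zero.mp h2

lemma Dl_iter_single (j : ℕ) (u : E.carrier) :
    (⇑(Dl (E := E)))^[j] (Finsupp.single 0 u) = Finsupp.single j u := by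
  induction j with
  | zero => rfl
  | succ j ih => rw [Function.iterate_succ_apply', ih, Dl_single]

lemma DQ_iter_mk (j : ℕ) (x : Vt E) :
    (⇑(DQ E))^[j] (Submodule.Quotient.mk x)
      = Submodule.Quotient.mk ((⇑(Dl (E := E)))^[j] x) := by
  induction j with
  | zero => rfl
  | succ j ih => rw [Function.iterate_succ_apply', ih, Function.iterate_succ_apply', DQ_mk]

variable (E) in
def iotaQ : E.carrier →ₗ[ℂ] Qt E := (NN E).mkQ.comp (Finsupp.lsingle 0)

lemma iotaQ_apply (u : E.carrier) :
    iotaQ E u = Submodule.Quotient.mk (Finsupp.single 0 u) := rfl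

theorem main (E : ErtexAlgebra) (hE : ErtexInjectiveFun E.mul) :
    ∃ (E' : DErtexAlgebra) (i : E.carrier →ₗ[ℂ] E'.carrier),
      ErtexInjectiveFun E'.mul ∧ IsMulHomFun E.mul E'.mul i ∧ Function.Injective i ∧
      DSpan E E' i = ⊤ := by
  refine ⟨{ carrier := Qt E
            mul := mulQ E
            isErtex :=
              { add_left := fun n u u' v => mulQ_add_left n u u' v
                smul_left := fun n c u v => mulQ_smul_left n c u v
                add_right := fun n u v v' => mulQ_add_right n u v v'
                smul_right := fun n c u v => mulQ_smul_right n c u v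
                trunc := fun u v => truncQ u v
                jacobi := fun u v w p q r => jacQ u v w p q r }
            D := DQ E
            isD := ⟨fun n u v => mulQ_DQ_left n u v,
                    fun n u v => mulQ_bracket n u v,
                    fun n u v => skewQ hE n u v⟩ },
    iotaQ E, injQ hE, ?_, ?_, ?_⟩
  · intro n u v
    rw [iotaQ_apply, iotaQ_apply, iotaQ_apply]
    show Submodule.Quotient.mk (Finsupp.single 0 (E.mul n u v))
      = mulQ E n (Submodule.Quotient.mk (Finsupp.single 0 u))
          (Submodule.Quotient.mk (Finsupp.single 0 v))
    rw [mulQ_mk, vmul_single0]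
  · intro a b hab
    have h1 : iotaQ E (a - b) = 0 := by rw [map_sub, hab, sub_self]
    rw [iotaQ_apply, Submodule.Quotient.mk_eq_zero] at h1
    have h2 := single0_NN hE h1
    exact sub_eq_zero.mp h2
  · apply Submodule.eq_top_iff'.mpr
    intro x
    obtain ⟨f, rfl⟩ := Submodule.Quotient.mk_surjective _ x
    induction f using Finsupp.induction_linear with
    | zero =>
      rw [Submodule.Quotient.mk_zero]
      exact Submodule.zero_mem _
    | add f g hf hg =>
      rw [Submodule.Quotient.mk_add]
      exact Submodule.add_mem _ hf hg
    | single j u =>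
      apply Submodule.subset_span
      refine ⟨j, u, ?_⟩
      show Submodule.Quotient.mk (Finsupp.single j u) = (⇑(DQ E))^[j] (iotaQ E u)
      rw [iotaQ_apply, DQ_iter_mk, Dl_iter_single]

end Final

end Blayer
end Stmt9

/-- every injective ertex algebra `E` embeds into an injective `D`-ertex
algebra `E′` which is the linear span of `{Dⁿ i(u) : n ≥ 0, u ∈ E}`. -/
theorem stmt_9 (E : ErtexAlgebra) (hE : ErtexInjectiveFun E.mul) :
    ∃ (E' : DErtexAlgebra) (i : E.carrier →ₗ[ℂ] E'.carrier),
      ErtexInjectiveFun E'.mul ∧ IsMulHomFun E.mul E'.mul i ∧ Function.Injective i ∧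
      DSpan E E' i = ⊤ :=
  Stmt9.main E hE

end
end
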